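/- arXiv:2204.09174 — 3 statements merged into one kernel-verified Lean document; each statement's English description precedes it below -/
import Mathlib

section
/- Let W be a Coxeter group, u ≤ v in Bruhat order, and s a simple reflection with s a left descent of v but not a left descent of u. Then left multiplication by s maps the Bruhat interval [u,v] bijectively to itself, and preserves the relation 'x and y differ by right multiplication by a reflection'. In other words, L_s restricts to a graph automorphism of the undirected Bruhat graph on [u,v]. -/
open CoxeterSystem

variable {B W : Type*} [Group W] {M : CoxeterMatrix B}

/-- One step of Bruhat order: multiply on the right by a reflection, increasing length. -/
def bruhatStep (cs : CoxeterSystem M W) (x y : W) : Prop :=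
  ∃ t : W, cs.IsReflection t ∧ y = x * t ∧ cs.length x < cs.length y

/-- Bruhat order on a Coxeter group. -/
def bruhatLE (cs : CoxeterSystem M W) : W → W → Prop :=
  Relation.ReflTransGen (bruhatStep cs)

/-- Strict Bruhat order. -/
def bruhatLT (cs : CoxeterSystem M W) (x y : W) : Prop :=
  bruhatLE cs x y ∧ x ≠ y

/-- Cover relation in Bruhat order. -/
def bruhatCovBy (cs : CoxeterSystem M W) (x y : W) : Prop :=
  bruhatLE cs x y ∧ cs.length y = cs.length x + 1

/-- The Bruhat interval `[u, v]`. -/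
def bruhatInterval (cs : CoxeterSystem M W) (u v : W) : Set W :=
  {x | bruhatLE cs u x ∧ bruhatLE cs x v}

/-- The support of `w`: simple reflections appearing in a reduced word for `w`. -/
def supp (cs : CoxeterSystem M W) (w : W) : Set B :=
  {i | ∃ ω : List B, cs.IsReduced ω ∧ w = cs.wordProd ω ∧ i ∈ ω}


namespace BruhatAux

open scoped Classical

variable {B W : Type*} [Group W] {M : CoxeterMatrix B} (cs : CoxeterSystem M W)

local prefix:100 "s" => cs.simple
local prefix:100 "π" => cs.wordProd
local prefix:100 "ℓ" => cs.length

/-- Underlying function of the parity reflection permutation. -/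
noncomputable def Ffun (i : B) : W × ZMod 2 → W × ZMod 2 :=
  fun p => (s i * p.1 * s i, p.2 + if p.1 = s i then 1 else 0)

lemma zmod2_add_self (a : ZMod 2) : a + a = 0 := by
  have : a + a = 2 * a := (two_mul a).symm
  rw [this, show (2 : ZMod 2) = 0 by decide, zero_mul]

lemma Ffun_invol (i : B) : Function.Involutive (Ffun cs i) := by
  intro p
  obtain ⟨t, z⟩ := p
  simp only [Ffun]
  have h1 : s i * (s i * t * s i) * s i = t := by
    rw [← mul_assoc, ← mul_assoc, cs.simple_mul_simple_self, one_mul,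
      cs.simple_mul_simple_cancel_right]
  have h2 : (s i * t * s i = s i) ↔ (t = s i) := by
    constructor
    · intro h
      have := congrArg (fun x => s i * x * s i) h
      simpa [h1, cs.simple_mul_simple_cancel_left] using this
    · rintro rfl
      rw [cs.simple_mul_simple_cancel_right]
  refine Prod.ext h1 ?_
  show (z + if t = s i then 1 else 0) + (if s i * t * s i = s i then 1 else 0) = z
  rw [if_congr h2 rfl rfl, add_assoc]
  rcases eq_or_ne t (s i) with h | h
  · simp [h, zmod2_add_self]
  · simp [h]

/-- The parity reflection permutation attached to a simple reflection. -/
noncomputable def F (i : B) : Equiv.Perm (W × ZMod 2) := (Ffun_invol cs i).toPerm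

lemma F_apply (i : B) (t : W) (z : ZMod 2) :
    F cs i (t, z) = (s i * t * s i, z + if t = s i then 1 else 0) := rfl


lemma conj_eq_iff (g x y : W) : g * x * g⁻¹ = y ↔ x = g⁻¹ * y * g := by
  constructor
  · rintro rfl; group
  · rintro rfl; group

lemma conj_seed (i j : B) (n : ℕ) :
    (s j * s i) * (s j * (s i * s j) ^ n) * (s i * s j) = s j * (s i * s j) ^ (n + 2) := by
  have hc : (s i * s j) * (s i * s j) ^ n = (s i * s j) ^ n * (s i * s j) :=
    (pow_succ' (s i * s j) n).symm.trans (pow_succ (s i * s j) n)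
  have h2 : (s i * s j) ^ (n + 2) = (s i * s j) * ((s i * s j) ^ n * (s i * s j)) :=
    calc (s i * s j) ^ (n + 2) = (s i * s j) ^ (n + 1) * (s i * s j) := pow_succ _ _
      _ = ((s i * s j) * (s i * s j) ^ n) * (s i * s j) := by rw [pow_succ']
      _ = (s i * s j) * ((s i * s j) ^ n * (s i * s j)) := mul_assoc _ _ _
  rw [h2]
  simp only [mul_assoc]

lemma conj_pow (i j : B) (n k : ℕ) :
    (s j * s i) ^ k * (s j * (s i * s j) ^ n) * (s i * s j) ^ k
      = s j * (s i * s j) ^ (n + 2 * k) := by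
  induction k with
  | zero => simp
  | succ k ih =>
    rw [pow_succ' (s j * s i), pow_succ (s i * s j)]
    calc (s j * s i * (s j * s i) ^ k) * (s j * (s i * s j) ^ n)
          * ((s i * s j) ^ k * (s i * s j))
        = (s j * s i) * ((s j * s i) ^ k * (s j * (s i * s j) ^ n) * (s i * s j) ^ k)
          * (s i * s j) := by simp only [mul_assoc]
      _ = (s j * s i) * (s j * (s i * s j) ^ (n + 2 * k)) * (s i * s j) := by rw [ih]
      _ = s j * (s i * s j) ^ (n + 2 * k + 2) := conj_seed cs i j _
      _ = s j * (s i * s j) ^ (n + 2 * (k + 1)) := by ring_nf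

lemma inv_q_pow (i j : B) (k : ℕ) : ((s i * s j) ^ k)⁻¹ = (s j * s i) ^ k := by
  rw [← inv_pow, mul_inv_rev, cs.inv_simple, cs.inv_simple]

lemma condA (i j : B) (k : ℕ) (t : W) :
    ((s i * s j) ^ k * t * ((s i * s j) ^ k)⁻¹ = s j) ↔ (t = s j * (s i * s j) ^ (2 * k)) := by
  rw [conj_eq_iff, inv_q_pow]
  have h0 := conj_pow cs i j 0 k
  rw [pow_zero, mul_one, zero_add] at h0
  rw [h0]

lemma condB (i j : B) (k : ℕ) (t : W) :
    (s j * ((s i * s j) ^ k * t * ((s i * s j) ^ k)⁻¹) * s j = s i)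
      ↔ (t = s j * (s i * s j) ^ (2 * k + 1)) := by
  have hg : s j * ((s i * s j) ^ k * t * ((s i * s j) ^ k)⁻¹) * s j
      = (s j * (s i * s j) ^ k) * t * (s j * (s i * s j) ^ k)⁻¹ := by
    rw [mul_inv_rev, cs.inv_simple]
    simp only [mul_assoc]
  rw [hg, conj_eq_iff]
  have h1 := conj_pow cs i j 1 k
  rw [pow_one] at h1
  have h2 : (s j * (s i * s j) ^ k)⁻¹ * s i * (s j * (s i * s j) ^ k)
      = s j * (s i * s j) ^ (2 * k + 1) := by
    rw [mul_inv_rev, inv_q_pow, cs.inv_simple, show 2 * k + 1 = 1 + 2 * k by ring, ← h1]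
    simp only [mul_assoc]
  rw [h2]

lemma pow_formula (i j : B) (k : ℕ) (t : W) (z : ZMod 2) :
    ((F cs i * F cs j) ^ k) (t, z) =
      ((s i * s j) ^ k * t * ((s i * s j) ^ k)⁻¹,
        z + ∑ n ∈ Finset.range (2 * k), if t = s j * (s i * s j) ^ n then 1 else 0) := by
  induction k with
  | zero => simp
  | succ k ih =>
    rw [pow_succ' (F cs i * F cs j), Equiv.Perm.mul_apply, ih, Equiv.Perm.mul_apply,
      F_apply, F_apply]
    refine Prod.ext ?_ ?_
    · show s i * (s j * ((s i * s j) ^ k * t * ((s i * s j) ^ k)⁻¹) * s j) * s i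
        = (s i * s j) ^ (k + 1) * t * ((s i * s j) ^ (k + 1))⁻¹
      rw [inv_q_pow, inv_q_pow, pow_succ' (s i * s j), pow_succ (s j * s i)]
      simp only [mul_assoc]
    · show (_ + if (s i * s j) ^ k * t * ((s i * s j) ^ k)⁻¹ = s j then 1 else 0)
          + (if s j * ((s i * s j) ^ k * t * ((s i * s j) ^ k)⁻¹) * s j = s i then 1 else 0)
        = z + ∑ n ∈ Finset.range (2 * (k + 1)), if t = s j * (s i * s j) ^ n then 1 else 0
      rw [if_congr (condA cs i j k t) rfl rfl, if_congr (condB cs i j k t) rfl rfl,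
        show 2 * (k + 1) = (2 * k) + 1 + 1 by ring,
        Finset.sum_range_succ, Finset.sum_range_succ]
      simp only [add_assoc]

lemma isLiftable : M.IsLiftable (F cs) := by
  intro i j
  apply Equiv.ext
  rintro ⟨t, z⟩
  rw [pow_formula, cs.simple_mul_simple_pow i j]
  have hsum : ∑ n ∈ Finset.range (2 * M i j),
      (if t = s j * (s i * s j) ^ n then (1 : ZMod 2) else 0) = 0 := by
    rw [two_mul, Finset.sum_range_add]
    have heq : ∀ n, (if t = s j * (s i * s j) ^ (M i j + n) then (1 : ZMod 2) else 0)
        = (if t = s j * (s i * s j) ^ n then (1 : ZMod 2) else 0) := by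
      intro n
      rw [pow_add, cs.simple_mul_simple_pow i j, one_mul]
    simp only [heq]
    exact zmod2_add_self _
  rw [hsum]
  simp

lemma zmod2_eq_of_add_eq_zero : ∀ a b : ZMod 2, a + b = 0 → a = b := by decide

lemma zmod2_ne_one : ∀ a : ZMod 2, a ≠ 1 → a = 0 := by decide

lemma zmod2_sandwich : ∀ a : ZMod 2, a + (1 + a) = 1 := by decide

/-- The homomorphism from `W` to permutations of `W × ZMod 2`. -/
noncomputable def phi : W →* Equiv.Perm (W × ZMod 2) := cs.lift ⟨F cs, isLiftable cs⟩

lemma phi_simple (i : B) : phi cs (s i) = F cs i := cs.lift_apply_simple (isLiftable cs) i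

/-- Mod-2 count of occurrences of `t` in a list. -/
noncomputable def occ (t : W) (l : List W) : ZMod 2 :=
  (l.map (fun c => if t = c then (1 : ZMod 2) else 0)).sum

lemma occ_nil (t : W) : occ t [] = 0 := rfl

lemma occ_cons (t c : W) (l : List W) :
    occ t (c :: l) = (if t = c then 1 else 0) + occ t l := by
  simp [occ]

lemma occ_eq_zero_of_not_mem {t : W} {l : List W} (h : t ∉ l) : occ t l = 0 := by
  induction l with
  | nil => rfl
  | cons c l ih =>
    have h1 : t ≠ c := fun hc => h (by rw [hc]; exact List.mem_cons_self)
    have h2 : t ∉ l := fun hl => h (List.mem_cons_of_mem c hl)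
    rw [occ_cons, if_neg h1, ih h2, add_zero]

lemma phi_wordProd (ω : List B) (t : W) (z : ZMod 2) :
    phi cs (π ω) (t, z) =
      ((π ω) * t * (π ω)⁻¹, z + occ t (cs.rightInvSeq ω)) := by
  induction ω with
  | nil => simp [occ_nil]
  | cons i ω ih =>
    rw [cs.wordProd_cons, map_mul, Equiv.Perm.mul_apply, ih, phi_simple, F_apply]
    have hris : cs.rightInvSeq (i :: ω) = ((π ω)⁻¹ * s i * π ω) :: cs.rightInvSeq ω := rfl
    refine Prod.ext ?_ ?_
    · show s i * (π ω * t * (π ω)⁻¹) * s i = (s i * π ω) * t * (s i * π ω)⁻¹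
      rw [mul_inv_rev, cs.inv_simple]
      simp only [mul_assoc]
    · show (z + occ t (cs.rightInvSeq ω)) + (if π ω * t * (π ω)⁻¹ = s i then 1 else 0)
        = z + occ t (cs.rightInvSeq (i :: ω))
      rw [hris, occ_cons, if_congr (conj_eq_iff (π ω) t (s i)) rfl rfl]
      rw [add_assoc, add_comm (occ t (cs.rightInvSeq ω))]

/-- The parity of the number of times `t` occurs as a "right inversion with multiplicity"
of `w`. -/
noncomputable def nu (w t : W) : ZMod 2 := (phi cs w (t, 0)).2

lemma nu_wordProd (ω : List B) (t : W) : nu cs (π ω) t = occ t (cs.rightInvSeq ω) := by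
  unfold nu
  rw [phi_wordProd, zero_add]

lemma phi_apply (w t : W) (z : ZMod 2) :
    phi cs w (t, z) = (w * t * w⁻¹, z + nu cs w t) := by
  obtain ⟨ω, -, rfl⟩ := cs.exists_reduced_word' w
  rw [phi_wordProd, nu_wordProd]

lemma nu_mul (x y t : W) : nu cs (x * y) t = nu cs y t + nu cs x (y * t * y⁻¹) := by
  have h1 : phi cs (x * y) (t, 0) = phi cs x (phi cs y (t, 0)) := by
    rw [map_mul, Equiv.Perm.mul_apply]
  unfold nu
  rw [h1, phi_apply cs y t 0, zero_add, phi_apply cs x (y * t * y⁻¹) (nu cs y t)]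
  rfl

lemma nu_one (t : W) : nu cs 1 t = 0 := by
  unfold nu
  simp

lemma nu_inv (w t : W) : nu cs w⁻¹ t = nu cs w (w⁻¹ * t * w) := by
  have h := nu_mul cs w w⁻¹ t
  rw [mul_inv_cancel, nu_one, inv_inv] at h
  exact zmod2_eq_of_add_eq_zero _ _ h.symm

lemma nu_simple_self (i : B) : nu cs (s i) (s i) = 1 := by
  unfold nu
  rw [phi_simple, F_apply, if_pos rfl]
  norm_num

lemma nu_reflection_self {t : W} (ht : cs.IsReflection t) : nu cs t t = 1 := by
  obtain ⟨w, i, rfl⟩ := ht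
  have key : w⁻¹ * (w * s i * w⁻¹) * w = s i := by group
  have h1 := nu_mul cs (w * s i) w⁻¹ (w * s i * w⁻¹)
  rw [show w * s i * w⁻¹ = w * s i * w⁻¹ from rfl, inv_inv] at h1
  rw [show w⁻¹ * (w * s i * w⁻¹) * w = s i from key] at h1
  have h2 := nu_mul cs w (s i) (s i)
  rw [mul_inv_cancel_right, nu_simple_self] at h2
  have h3 := nu_inv cs w (w * s i * w⁻¹)
  rw [key] at h3
  rw [show (w * s i) * w⁻¹ = w * s i * w⁻¹ from rfl] at h1
  rw [h3, h2] at h1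
  rw [h1]
  exact zmod2_sandwich _

lemma length_mul_lt_of_nu_eq_one {t : W} (ht : cs.IsReflection t) {w : W}
    (h : nu cs w t = 1) : ℓ (w * t) < ℓ w := by
  obtain ⟨ω, hω, rfl⟩ := cs.exists_reduced_word' w
  rw [nu_wordProd] at h
  have hmem : t ∈ cs.rightInvSeq ω := by
    by_contra hmem
    rw [occ_eq_zero_of_not_mem hmem] at h
    exact zero_ne_one h
  exact (cs.isRightInversion_of_mem_rightInvSeq hω hmem).2

lemma nu_eq_one_iff {t : W} (ht : cs.IsReflection t) (w : W) :
    ℓ (w * t) < ℓ w ↔ nu cs w t = 1 := by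
  constructor
  · intro hlt
    by_contra hne
    have h0 : nu cs w t = 0 := zmod2_ne_one _ hne
    have h1 : nu cs (w * t) t = 1 := by
      rw [nu_mul, mul_inv_cancel_right, nu_reflection_self cs ht, h0, add_zero]
    have h2 := length_mul_lt_of_nu_eq_one cs ht h1
    rw [mul_assoc, ht.mul_self, mul_one] at h2
    omega
  · exact length_mul_lt_of_nu_eq_one cs ht

/-- **Strong exchange property.** -/
theorem strong_exchange {t : W} (ht : cs.IsReflection t) {w : W} (hlt : ℓ (w * t) < ℓ w)
    {ω : List B} (hω : π ω = w) : ∃ j < ω.length, π (ω.eraseIdx j) = w * t := by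
  subst hω
  have h1 : nu cs (π ω) t = 1 := (nu_eq_one_iff cs ht _).mp hlt
  rw [nu_wordProd] at h1
  have hmem : t ∈ cs.rightInvSeq ω := by
    by_contra hmem
    rw [occ_eq_zero_of_not_mem hmem] at h1
    exact zero_ne_one h1
  obtain ⟨j, hj, hjt⟩ := List.mem_iff_getElem.mp hmem
  have hj' : j < ω.length := by
    rw [cs.length_rightInvSeq] at hj
    exact hj
  refine ⟨j, hj', ?_⟩
  rw [← cs.wordProd_mul_getD_rightInvSeq ω j, List.getD_eq_getElem _ 1 hj, hjt]


/-! ### Bruhat order lemmas -/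

lemma le_refl' (x : W) : bruhatLE cs x x := Relation.ReflTransGen.refl

lemma le_trans' {x y z : W} (h1 : bruhatLE cs x y) (h2 : bruhatLE cs y z) :
    bruhatLE cs x z := Relation.ReflTransGen.trans h1 h2

lemma step_up {x t : W} (ht : cs.IsReflection t) (h : ℓ x < ℓ (x * t)) :
    bruhatLE cs x (x * t) :=
  Relation.ReflTransGen.single ⟨t, ht, rfl, h⟩

lemma step_down {x t : W} (ht : cs.IsReflection t) (h : ℓ (x * t) < ℓ x) :
    bruhatLE cs (x * t) x := by
  have hx : x = (x * t) * t := by rw [mul_assoc, ht.mul_self, mul_one]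
  exact Relation.ReflTransGen.single ⟨t, ht, hx, h⟩

lemma le_inv {u v : W} (h : bruhatLE cs u v) : bruhatLE cs u⁻¹ v⁻¹ := by
  induction h with
  | refl => exact Relation.ReflTransGen.refl
  | @tail b c hab hbc ih =>
    obtain ⟨t, ht, rfl, hl⟩ := hbc
    refine ih.trans (Relation.ReflTransGen.single ⟨b * t * b⁻¹, ht.conj b, ?_, ?_⟩)
    · rw [mul_inv_rev, ht.inv, show b⁻¹ * (b * t * b⁻¹) = t * b⁻¹ by group]
    · rw [cs.length_inv, cs.length_inv]
      exact hl

/-- Any word contains a reduced sublist with the same product. -/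
lemma exists_reduced_sublist : ∀ (n : ℕ) (ω : List B), ω.length ≤ n →
    ∃ ω' : List B, ω'.Sublist ω ∧ cs.IsReduced ω' ∧ π ω' = π ω := by
  intro n
  induction n with
  | zero =>
    intro ω hω
    rw [Nat.le_zero, List.length_eq_zero_iff] at hω
    subst hω
    exact ⟨[], List.Sublist.refl _, by simp [CoxeterSystem.IsReduced], rfl⟩
  | succ n ih =>
    intro ω hω
    by_cases hred : cs.IsReduced ω
    · exact ⟨ω, List.Sublist.refl ω, hred, rfl⟩
    · have hne : ω ≠ [] := by
        rintro rfl
        exact hred (by simp [CoxeterSystem.IsReduced])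
      have hlen1 : 1 ≤ ω.length := by
        cases ω with
        | nil => exact absurd rfl hne
        | cons a l => simp
      have hex : ∃ k, ¬ cs.IsReduced (ω.take (k + 1)) := by
        refine ⟨ω.length - 1, ?_⟩
        rwa [Nat.sub_add_cancel hlen1, List.take_of_length_le (le_refl _)]
      classical
      set k := Nat.find hex with hkdef
      have hk : ¬ cs.IsReduced (ω.take (k + 1)) := Nat.find_spec hex
      have hklt : k < ω.length := by
        have : k ≤ ω.length - 1 := Nat.find_le (by
          rwa [Nat.sub_add_cancel hlen1, List.take_of_length_le (le_refl _)])
        omega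
      have hσred : cs.IsReduced (ω.take k) := by
        rcases Nat.eq_zero_or_pos k with h0 | h0
        · rw [h0]
          simp [CoxeterSystem.IsReduced]
        · have := Nat.find_min hex (m := k - 1) (by omega)
          rw [not_not] at this
          rwa [show k - 1 + 1 = k by omega] at this
      have hσlen : (ω.take k).length = k := by
        rw [List.length_take]
        omega
      have htake : ω.take (k + 1) = ω.take k ++ [ω[k]] := by
        rw [List.take_succ, List.getElem?_eq_getElem hklt]
        rfl
      have hπtake : π (ω.take (k + 1)) = π (ω.take k) * s (ω[k]) := by
        rw [htake, cs.wordProd_append, cs.wordProd_singleton]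
      have hℓσ : ℓ (π (ω.take k)) = k := by
        rw [hσred]
        exact hσlen
      have hlt : ℓ (π (ω.take k) * s (ω[k])) < ℓ (π (ω.take k)) := by
        rcases cs.length_mul_simple (π (ω.take k)) (ω[k]) with h | h
        · exfalso
          apply hk
          show ℓ (π (ω.take (k+1))) = (ω.take (k+1)).length
          rw [hπtake, h, hℓσ, List.length_take]
          omega
        · omega
      obtain ⟨j, hj, hje⟩ := strong_exchange cs (cs.isReflection_simple (ω[k])) hlt rfl
      rw [hσlen] at hj
      set ω₂ := (ω.take k).eraseIdx j ++ ω.drop (k + 1) with hω₂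
      have hπ2 : π ω₂ = π ω := by
        conv_rhs => rw [← List.take_append_drop (k + 1) ω]
        rw [hω₂, cs.wordProd_append, cs.wordProd_append, hje, hπtake]
      have hsub2 : ω₂.Sublist ω := by
        conv_rhs => rw [← List.take_append_drop k ω]
        refine List.Sublist.append (List.eraseIdx_sublist _ _) ?_
        rw [← List.drop_drop]
        exact List.drop_sublist _ _
      have hlen2 : ω₂.length ≤ n := by
        rw [hω₂, List.length_append, List.length_eraseIdx, hσlen, List.length_drop]
        simp only [hj, if_pos]
        omega
      obtain ⟨ω', hsub', hred', hπ'⟩ := ih ω₂ hlen2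
      exact ⟨ω', hsub'.trans hsub2, hred', by rw [hπ', hπ2]⟩

/-- Subword property, downward direction. -/
lemma subword_of_le {u w : W} (h : bruhatLE cs u w) {ω : List B} (hω : cs.IsReduced ω)
    (hπ : π ω = w) : ∃ ω' : List B, ω'.Sublist ω ∧ cs.IsReduced ω' ∧ π ω' = u := by
  induction h using Relation.ReflTransGen.head_induction_on with
  | refl => exact ⟨ω, List.Sublist.refl ω, hω, hπ⟩
  | @head a c hstep hrest ih =>
    obtain ⟨ωy, hsub, hred, hπy⟩ := ih
    obtain ⟨t, ht, hc, hl⟩ := hstep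
    have ha : a = c * t := by rw [hc, mul_assoc, ht.mul_self, mul_one]
    have hlt : ℓ (π ωy * t) < ℓ (π ωy) := by
      rw [hπy, ← ha]
      exact hl
    obtain ⟨j, hj, hje⟩ := strong_exchange cs ht hlt rfl
    obtain ⟨ω', hsub', hred', hπ'⟩ :=
      exists_reduced_sublist cs (ωy.eraseIdx j).length (ωy.eraseIdx j) (le_refl _)
    refine ⟨ω', (hsub'.trans (List.eraseIdx_sublist ωy j)).trans hsub, hred', ?_⟩
    rw [hπ', hje, hπy, ← ha]

/-- The key one-step lemma towards the lifting property. -/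
lemma step_lemma (u t : W) (ht : cs.IsReflection t) (hl : ℓ u < ℓ (u * t)) (i : B) :
    bruhatLE cs (u * s i) (u * t) ∨ bruhatLE cs (u * s i) (u * t * s i) := by
  have hconj : cs.IsReflection (s i * t * s i) := by
    have := ht.conj (s i)
    rwa [cs.inv_simple] at this
  have he1 : (u * s i) * (s i * t * s i) = u * t * s i := by
    rw [show (u * s i) * (s i * t * s i) = u * (s i * s i) * t * s i by group,
      cs.simple_mul_simple_self, mul_one]
  rcases Nat.lt_or_gt_of_ne (cs.length_mul_simple_ne u i) with hus | hus
  · -- ℓ (u * s i) < ℓ u : then u * s i ≤ u ≤ u * t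
    exact Or.inl ((step_down cs (cs.isReflection_simple i) hus).trans (step_up cs ht hl))
  · have hus1 : ℓ (u * s i) = ℓ u + 1 := by
      rcases cs.length_mul_simple u i with h | h
      · exact h
      · omega
    rcases Nat.lt_or_gt_of_ne (cs.length_mul_simple_ne (u * t) i) with hvs | hvs
    · -- ℓ (u * t * s i) < ℓ (u * t)
      have he2 : (u * s i) = (u * t * s i) * (s i * t * s i) := by
        rw [show (u * t * s i) * (s i * t * s i) = u * t * (s i * s i) * t * s i by group,
          cs.simple_mul_simple_self, mul_one, mul_assoc u t, ht.mul_self, mul_one]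
      rcases lt_trichotomy (ℓ (u * s i)) (ℓ (u * t * s i)) with h3 | h3 | h3
      · -- step up from u * s i to u * t * s i
        right
        have := step_up cs hconj (x := u * s i) (by rwa [he1])
        rwa [he1] at this
      · exfalso
        have hne : ℓ ((u * t * s i) * (s i * t * s i)) ≠ ℓ (u * t * s i) :=
          hconj.length_mul_left_ne (u * t * s i)
        rw [← he2] at hne
        omega
      · -- the strong exchange case
        have hmsd := cs.length_mul_simple (u * t) i
        have hv1 : ℓ (u * t) = ℓ u + 1 := by omega
        have hvs1 : ℓ (u * t * s i) = ℓ u := by omega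
        obtain ⟨σ, hσred, hσπ⟩ := cs.exists_reduced_word' (u * t * s i)
        have hσlen : σ.length = ℓ u := by
          rw [← hvs1, hσπ]
          exact hσred.symm
        have hπω : π (σ ++ [i]) = u * t := by
          rw [cs.wordProd_append, cs.wordProd_singleton, ← hσπ, mul_assoc,
            cs.simple_mul_simple_self, mul_one]
        have hωred : cs.IsReduced (σ ++ [i]) := by
          show ℓ (π (σ ++ [i])) = _
          rw [hπω, List.length_append, List.length_singleton, hσlen, hv1]
        have hvt : u * t * t = u := by rw [mul_assoc, ht.mul_self, mul_one]
        have hlt2 : ℓ (u * t * t) < ℓ (u * t) := by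
          rw [hvt]
          omega
        obtain ⟨j, hj, hje⟩ := strong_exchange cs ht hlt2 hπω
        rw [hvt] at hje
        rw [List.length_append, List.length_singleton] at hj
        rcases Nat.lt_or_ge j σ.length with hjσ | hjσ
        · exfalso
          rw [List.eraseIdx_append_of_lt_length hjσ] at hje
          have : u * s i = π (σ.eraseIdx j) := by
            rw [← hje, cs.wordProd_append, cs.wordProd_singleton, mul_assoc,
              cs.simple_mul_simple_self, mul_one]
          have hb := cs.length_wordProd_le (σ.eraseIdx j)
          rw [← this, List.length_eraseIdx, if_pos hjσ, hσlen] at hb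
          omega
        · -- j = σ.length : u = π σ = u * t * s i, so u * s i = u * t
          have hjeq : j = σ.length := by omega
          have her : (σ ++ [i]).eraseIdx σ.length = σ := by
            rw [List.eraseIdx_append_of_length_le (le_refl _), Nat.sub_self]
            simp
          rw [hjeq, her] at hje
          left
          have h5 : u = u * t * s i := by rw [hσπ, hje]
          have h6 : u * s i = u * t := by
            conv_lhs => rw [h5]
            rw [cs.simple_mul_simple_cancel_right]
          rw [h6]
          exact Relation.ReflTransGen.refl
    · -- ℓ (u * t) < ℓ (u * t * s i) : step up from u * s i to u * t * s i
      right
      have hv2 : ℓ (u * t * s i) = ℓ (u * t) + 1 := by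
        rcases cs.length_mul_simple (u * t) i with h | h <;> omega
      have := step_up cs hconj (x := u * s i) (by rw [he1]; omega)
      rwa [he1] at this

lemma sublist_concat_cases {α : Type*} {ω' σ : List α} {k : α} (h : ω'.Sublist (σ ++ [k])) :
    ω'.Sublist σ ∨ ∃ σ', ω' = σ' ++ [k] ∧ σ'.Sublist σ := by
  obtain ⟨r₁, r₂, rfl, h1, h2⟩ := List.sublist_append_iff.mp h
  rcases List.sublist_singleton.mp h2 with rfl | rfl
  · exact Or.inl (by simpa using h1)
  · exact Or.inr ⟨r₁, rfl, h1⟩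

lemma chain_lemma {u w : W} (h : bruhatLE cs u w) (i : B) :
    bruhatLE cs (u * s i) w ∨ bruhatLE cs (u * s i) (w * s i) := by
  induction h using Relation.ReflTransGen.head_induction_on with
  | refl => exact Or.inr Relation.ReflTransGen.refl
  | @head a c hstep hrest ih =>
    obtain ⟨t, ht, rfl, hl⟩ := hstep
    rcases step_lemma cs a t ht hl i with h1 | h1
    · exact Or.inl (h1.trans hrest)
    · exact Or.imp h1.trans h1.trans ih

/-- Lifting, upward form: if `u ≤ w` and `w < w sᵢ` then `u sᵢ ≤ w sᵢ`. -/
lemma mul_simple_le_of_lt {u w : W} (h : bruhatLE cs u w) (i : B)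
    (hw : ℓ w < ℓ (w * s i)) : bruhatLE cs (u * s i) (w * s i) := by
  rcases chain_lemma cs h i with h1 | h1
  · exact h1.trans (step_up cs (cs.isReflection_simple i) hw)
  · exact h1

/-- Lifting, absorption form: if `x ≤ v` and `v sᵢ < v` then `x sᵢ ≤ v`. -/
lemma mul_simple_le_of_descent {x v : W} (h : bruhatLE cs x v) (i : B)
    (hv : ℓ (v * s i) < ℓ v) : bruhatLE cs (x * s i) v := by
  rcases chain_lemma cs h i with h1 | h1
  · exact h1
  · exact h1.trans (step_down cs (cs.isReflection_simple i) hv)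

/-- Subword property, upward direction: a reduced subword gives a Bruhat-smaller element. -/
lemma le_of_sublist : ∀ (n : ℕ) (ω ω' : List B), ω.length ≤ n → ω'.Sublist ω →
    cs.IsReduced ω → cs.IsReduced ω' → bruhatLE cs (π ω') (π ω) := by
  intro n
  induction n with
  | zero =>
    intro ω ω' hn hsub _ _
    rw [Nat.le_zero, List.length_eq_zero_iff] at hn
    subst hn
    rw [List.sublist_nil.mp hsub]
    exact Relation.ReflTransGen.refl
  | succ n ih =>
    intro ω ω' hn hsub hred hred'
    rcases List.eq_nil_or_concat ω with rfl | ⟨σ, k, rfl⟩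
    · rw [List.sublist_nil.mp hsub]
      exact Relation.ReflTransGen.refl
    · rw [List.concat_eq_append] at *
      have hσred : cs.IsReduced σ := by
        have := hred.take σ.length
        rwa [List.take_left] at this
      have hσn : σ.length ≤ n := by
        have := hn
        rw [List.length_append, List.length_singleton] at this
        omega
      have hπω : π (σ ++ [k]) = π σ * s k := by
        rw [cs.wordProd_append, cs.wordProd_singleton]
      have hℓω : ℓ (π σ) < ℓ (π σ * s k) := by
        have h1 : ℓ (π (σ ++ [k])) = σ.length + 1 := by
          rw [hred]
          rw [List.length_append, List.length_singleton]
        rw [hπω] at h1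
        rw [h1, hσred]
        omega
      rcases sublist_concat_cases hsub with hsb | ⟨σ', rfl, hsb⟩
      · exact (ih σ ω' hσn hsb hσred hred').trans
          (by rw [hπω]; exact step_up cs (cs.isReflection_simple k) hℓω)
      · have hσ'red : cs.IsReduced σ' := by
          have := hred'.take σ'.length
          rwa [List.take_left] at this
        have := mul_simple_le_of_lt cs (ih σ σ' hσn hsb hσred hσ'red) k hℓω
        rw [cs.wordProd_append, cs.wordProd_singleton, hπω]
        exact this

/-- Lifting, downward form: if `u ≤ x`, `u < u sᵢ` and `x sᵢ < x`, then `u ≤ x sᵢ`. -/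
lemma le_mul_simple_of_lt {u x : W} (h : bruhatLE cs u x) (i : B)
    (hu : ℓ u < ℓ (u * s i)) (hx : ℓ (x * s i) < ℓ x) : bruhatLE cs u (x * s i) := by
  obtain ⟨σ, hσred, hσπ⟩ := cs.exists_reduced_word' (x * s i)
  have hπω : π (σ ++ [i]) = x := by
    rw [cs.wordProd_append, cs.wordProd_singleton, ← hσπ, cs.simple_mul_simple_cancel_right]
  have hmsd := cs.length_mul_simple x i
  have hσlen : σ.length = ℓ (x * s i) := by
    rw [hσπ]
    exact hσred.symm
  have hωred : cs.IsReduced (σ ++ [i]) := by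
    show ℓ (π (σ ++ [i])) = _
    rw [hπω, List.length_append, List.length_singleton]
    omega
  obtain ⟨ω', hsub, hred', hπ'⟩ := subword_of_le cs h hωred hπω
  rcases sublist_concat_cases hsub with hsb | ⟨σ', rfl, hsb⟩
  · rw [← hπ', hσπ]
    exact le_of_sublist cs σ.length σ ω' (le_refl _) hsb hσred hred'
  · exfalso
    have hsplit : u * s i = π σ' := by
      rw [← hπ', cs.wordProd_append, cs.wordProd_singleton,
        cs.simple_mul_simple_cancel_right]
    have hb := cs.length_wordProd_le σ'
    have hlen' : ℓ u = σ'.length + 1 := by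
      rw [← hπ', hred']
      rw [List.length_append, List.length_singleton]
    rw [← hsplit] at hb
    omega

/-- Left-handed versions, via inverses. -/
lemma left_step_up {x : W} (i : B) (h : ℓ x < ℓ (s i * x)) :
    bruhatLE cs x (s i * x) := by
  have ht : cs.IsReflection (x⁻¹ * s i * x) := by
    have := (cs.isReflection_simple i).conj x⁻¹
    rwa [inv_inv] at this
  have he : x * (x⁻¹ * s i * x) = s i * x := by group
  have := step_up cs ht (x := x) (by rw [he]; exact h)
  rwa [he] at this

lemma left_step_down {x : W} (i : B) (h : ℓ (s i * x) < ℓ x) :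
    bruhatLE cs (s i * x) x := by
  have ht : cs.IsReflection (x⁻¹ * s i * x) := by
    have := (cs.isReflection_simple i).conj x⁻¹
    rwa [inv_inv] at this
  have he : x * (x⁻¹ * s i * x) = s i * x := by group
  have := step_down cs ht (x := x) (by rw [he]; exact h)
  rwa [he] at this

lemma le_simple_mul_of_lt {u x : W} (h : bruhatLE cs u x) (i : B)
    (hu : ℓ u < ℓ (s i * u)) (hx : ℓ (s i * x) < ℓ x) : bruhatLE cs u (s i * x) := by
  have h1 : bruhatLE cs u⁻¹ (x⁻¹ * s i) := by
    refine le_mul_simple_of_lt cs (le_inv cs h) i ?_ ?_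
    · rw [show u⁻¹ * s i = (s i * u)⁻¹ by rw [mul_inv_rev, cs.inv_simple], cs.length_inv,
        cs.length_inv]
      exact hu
    · rw [show x⁻¹ * s i = (s i * x)⁻¹ by rw [mul_inv_rev, cs.inv_simple], cs.length_inv,
        cs.length_inv]
      exact hx
  have := le_inv cs h1
  rwa [inv_inv, show (x⁻¹ * s i)⁻¹ = s i * x by rw [mul_inv_rev, cs.inv_simple, inv_inv]]
    at this

lemma simple_mul_le_of_descent {x v : W} (h : bruhatLE cs x v) (i : B)
    (hv : ℓ (s i * v) < ℓ v) : bruhatLE cs (s i * x) v := by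
  have h1 : bruhatLE cs (x⁻¹ * s i) v⁻¹ := by
    refine mul_simple_le_of_descent cs (le_inv cs h) i ?_
    rw [show v⁻¹ * s i = (s i * v)⁻¹ by rw [mul_inv_rev, cs.inv_simple], cs.length_inv,
      cs.length_inv]
    exact hv
  have := le_inv cs h1
  rwa [inv_inv, show (x⁻¹ * s i)⁻¹ = s i * x by rw [mul_inv_rev, cs.inv_simple, inv_inv]]
    at this

/-- Main lemma: `L_s` maps `[u,v]` into itself when `s ∈ D_L(v) \ D_L(u)`. -/
lemma mapsTo_interval {u v : W} (i : B) (hv : cs.IsLeftDescent v i)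
    (hu : ¬ cs.IsLeftDescent u i) {x : W} (hx : x ∈ bruhatInterval cs u v) :
    s i * x ∈ bruhatInterval cs u v := by
  obtain ⟨hux, hxv⟩ := hx
  have hul : ℓ u < ℓ (s i * u) := by
    have := cs.length_simple_mul_ne u i
    unfold CoxeterSystem.IsLeftDescent at hu
    omega
  have hvl : ℓ (s i * v) < ℓ v := hv
  rcases Nat.lt_or_gt_of_ne (cs.length_simple_mul_ne x i) with hxl | hxl
  · -- ℓ (s i * x) < ℓ x
    constructor
    · exact le_simple_mul_of_lt cs hux i hul hxl
    · exact (left_step_down cs i hxl).trans hxv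
  · -- ℓ x < ℓ (s i * x)
    constructor
    · exact hux.trans (left_step_up cs i hxl)
    · exact simple_mul_le_of_descent cs hxv i hvl

end BruhatAux

/-- Left multiplication by a simple reflection `s` with `s ∈ D_L(v) \ D_L(u)` restricts to an
automorphism of the undirected Bruhat graph on `[u,v]`. -/
theorem stmt1 (cs : CoxeterSystem M W) (u v : W) (i : B)
    (huv : bruhatLE cs u v)
    (hv : cs.IsLeftDescent v i) (hu : ¬ cs.IsLeftDescent u i) :
    Set.BijOn (fun x => cs.simple i * x) (bruhatInterval cs u v) (bruhatInterval cs u v) ∧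
    ∀ x ∈ bruhatInterval cs u v, ∀ y ∈ bruhatInterval cs u v,
      ((∃ t : W, cs.IsReflection t ∧ y = x * t) ↔
        (∃ t : W, cs.IsReflection t ∧ cs.simple i * y = (cs.simple i * x) * t)) := by
  constructor
  · refine ⟨fun x hx => BruhatAux.mapsTo_interval cs i hv hu hx, ?_, ?_⟩
    · intro x _ y _ hxy
      exact mul_left_cancel hxy
    · intro y hy
      exact ⟨cs.simple i * y, BruhatAux.mapsTo_interval cs i hv hu hy,
        cs.simple_mul_simple_cancel_left i⟩
  · intro x _ y _
    constructor
    · rintro ⟨t, ht, rfl⟩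
      exact ⟨t, ht, by rw [mul_assoc]⟩
    · rintro ⟨t, ht, h⟩
      rw [mul_assoc] at h
      exact ⟨t, ht, mul_left_cancel h⟩
end

section
/- In a right-angled Coxeter group, if x₁, x₂ ⋖ y₁, y₂ form a butterfly and q is a common left descent of y₁ and y₂, then q is a common left descent of x₁ and x₂. -/
open CoxeterSystem

variable {B W : Type*} [Group W] {M : CoxeterMatrix B}

namespace SEAux

/-- Solve a linear equation in a group. -/
private theorem mul_eq_iff' (u v w t : W) : u * t * v = w ↔ t = u⁻¹ * w * v⁻¹ := by
  constructor
  · intro h; rw [← h]; group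
  · intro h; rw [h]; group

open Classical in
/-- Parity count of occurrences of `t` in the right inversion sequence of `ω`. -/
noncomputable def fcount (cs : CoxeterSystem M W) : List B → W → ZMod 2
  | [], _ => 0
  | (i :: ω), t =>
      fcount cs ω t +
        (if t = (cs.wordProd ω)⁻¹ * cs.simple i * cs.wordProd ω then 1 else 0)

open Classical in
/-- The function underlying the reflection-counting permutation. -/
noncomputable def sigmaFun (cs : CoxeterSystem M W) (i : B) :
    W × ZMod 2 → W × ZMod 2 :=
  fun p => (cs.simple i * p.1 * cs.simple i,
    p.2 + if p.1 = cs.simple i then 1 else 0)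

theorem sigmaFun_involutive (cs : CoxeterSystem M W) (i : B) :
    Function.Involutive (sigmaFun cs i) := by
  rintro ⟨t, e⟩
  simp only [sigmaFun]
  rw [Prod.mk.injEq]
  have hc : (cs.simple i * t * cs.simple i = cs.simple i) ↔ (t = cs.simple i) := by
    rw [mul_eq_iff', cs.inv_simple]
    rw [show cs.simple i * cs.simple i * cs.simple i = cs.simple i by
      rw [cs.simple_mul_simple_self, one_mul]]
  refine ⟨?_, ?_⟩
  · simp [mul_assoc, cs.simple_mul_simple_self, cs.simple_mul_simple_cancel_left]
  · by_cases h : t = cs.simple i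
    · rw [if_pos h]; simp only [hc.mpr h, ↓reduceIte]
      have h11 : (1 : ZMod 2) + 1 = 0 := by decide
      rw [add_assoc, h11, add_zero]
    · rw [if_neg h]; simp only [show ¬ (cs.simple i * t * cs.simple i = cs.simple i) from fun hh => h (hc.mp hh), ↓reduceIte, add_zero]

/-- The reflection-counting permutation. -/
noncomputable def sigmaPerm (cs : CoxeterSystem M W) (i : B) : Equiv.Perm (W × ZMod 2) :=
  (sigmaFun_involutive cs i).toPerm _

@[simp] theorem sigmaPerm_apply (cs : CoxeterSystem M W) (i : B) (p : W × ZMod 2) :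
    sigmaPerm cs i p = sigmaFun cs i p := rfl

theorem liftable (cs : CoxeterSystem M W)
    (hra : ∀ i j : B, i ≠ j → M i j = 2 ∨ M i j = 0) :
    M.IsLiftable (sigmaPerm cs) := by
  classical
  intro i j
  by_cases hij : i = j
  · subst hij
    rw [M.diagonal, pow_one]
    refine Equiv.ext fun p => ?_
    exact sigmaFun_involutive cs i p
  · rcases hra i j hij with hM | hM
    · -- M i j = 2 : the simple reflections commute
      rw [hM]
      have h2 : (cs.simple i * cs.simple j) * (cs.simple i * cs.simple j) = 1 := by
        have := cs.simple_mul_simple_pow i j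
        rwa [hM, sq] at this
      have h2' : (cs.simple j * cs.simple i) * (cs.simple j * cs.simple i) = 1 := by
        have := cs.simple_mul_simple_pow' i j
        rwa [hM, sq] at this
      have hswap : cs.simple j * cs.simple i = cs.simple i * cs.simple j := by
        have h := mul_eq_one_iff_eq_inv.mp h2'
        rwa [mul_inv_rev, cs.inv_simple, cs.inv_simple] at h
      have hbab : cs.simple j * cs.simple i * cs.simple j = cs.simple i := by
        rw [hswap, mul_assoc, cs.simple_mul_simple_self, mul_one]
      have haba : cs.simple i * cs.simple j * cs.simple i = cs.simple j := by
        rw [← hswap, mul_assoc, cs.simple_mul_simple_self, mul_one]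
      rw [sq]
      refine Equiv.ext fun p => ?_
      obtain ⟨t, e⟩ := p
      simp only [Equiv.Perm.mul_apply, sigmaPerm_apply, sigmaFun, Equiv.Perm.one_apply]
      have e2 : (cs.simple j * t * cs.simple j = cs.simple i) ↔ (t = cs.simple i) := by
        rw [mul_eq_iff', cs.inv_simple, hbab]
      have e3 : (cs.simple i * (cs.simple j * t * cs.simple j) * cs.simple i = cs.simple j)
          ↔ (t = cs.simple j) := by
        rw [mul_eq_iff', cs.inv_simple, haba, mul_eq_iff', cs.inv_simple,
          show cs.simple j * cs.simple j * cs.simple j = cs.simple j by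
            rw [cs.simple_mul_simple_self, one_mul]]
      have e4 : (cs.simple j * (cs.simple i * (cs.simple j * t * cs.simple j) * cs.simple i)
            * cs.simple j = cs.simple i) ↔ (t = cs.simple i) := by
        rw [mul_eq_iff', cs.inv_simple, hbab, mul_eq_iff', cs.inv_simple,
          show cs.simple i * cs.simple i * cs.simple i = cs.simple i by
            rw [cs.simple_mul_simple_self, one_mul]]
        exact e2
      rw [Prod.mk.injEq]
      refine ⟨?_, ?_⟩
      · calc cs.simple i * (cs.simple j * (cs.simple i * (cs.simple j * t * cs.simple j)
              * cs.simple i) * cs.simple j) * cs.simple i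
            = ((cs.simple i * cs.simple j) * (cs.simple i * cs.simple j)) * t
              * ((cs.simple j * cs.simple i) * (cs.simple j * cs.simple i)) := by group
          _ = t := by rw [h2, h2', one_mul, mul_one]
      · rw [if_congr e2 rfl rfl, if_congr e3 rfl rfl, if_congr e4 rfl rfl]
        have hz : ∀ u v z : ZMod 2, z + u + v + u + v = z := by decide
        exact hz _ _ e
    · rw [hM, pow_zero]

/-- The counting homomorphism. -/
noncomputable def phi (cs : CoxeterSystem M W)
    (hra : ∀ i j : B, i ≠ j → M i j = 2 ∨ M i j = 0) :
    W →* Equiv.Perm (W × ZMod 2) :=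
  cs.lift ⟨sigmaPerm cs, liftable cs hra⟩

theorem phi_simple (cs : CoxeterSystem M W)
    (hra : ∀ i j : B, i ≠ j → M i j = 2 ∨ M i j = 0) (i : B) :
    phi cs hra (cs.simple i) = sigmaPerm cs i :=
  cs.lift_apply_simple (liftable cs hra) i

theorem phi_wordProd (cs : CoxeterSystem M W)
    (hra : ∀ i j : B, i ≠ j → M i j = 2 ∨ M i j = 0) :
    ∀ (ω : List B) (t : W) (e : ZMod 2),
      phi cs hra (cs.wordProd ω) (t, e) =
        (cs.wordProd ω * t * (cs.wordProd ω)⁻¹, e + fcount cs ω t) := by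
  intro ω
  induction ω with
  | nil => intro t e; simp [fcount]
  | cons i ω ih =>
      classical
      intro t e
      rw [cs.wordProd_cons, map_mul, Equiv.Perm.mul_apply, ih, phi_simple]
      simp only [sigmaPerm_apply, sigmaFun]
      rw [Prod.mk.injEq]
      refine ⟨?_, ?_⟩
      · rw [mul_inv_rev, cs.inv_simple]
        group
      · simp only [fcount]
        have hcond : (cs.wordProd ω * t * (cs.wordProd ω)⁻¹ = cs.simple i)
            ↔ (t = (cs.wordProd ω)⁻¹ * cs.simple i * cs.wordProd ω) := by
          rw [mul_eq_iff', inv_inv]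
        rw [if_congr hcond rfl rfl, add_assoc]

theorem fcount_eq_of_wordProd_eq (cs : CoxeterSystem M W)
    (hra : ∀ i j : B, i ≠ j → M i j = 2 ∨ M i j = 0)
    {ω ω' : List B} (h : cs.wordProd ω = cs.wordProd ω') (t : W) :
    fcount cs ω t = fcount cs ω' t := by
  have h1 := phi_wordProd cs hra ω t 0
  have h2 := phi_wordProd cs hra ω' t 0
  rw [h] at h1
  have h3 := (Prod.ext_iff.mp (h1.symm.trans h2)).2
  simpa using h3

theorem fcount_append (cs : CoxeterSystem M W)
    (hra : ∀ i j : B, i ≠ j → M i j = 2 ∨ M i j = 0)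
    (ω₁ ω₂ : List B) (t : W) :
    fcount cs (ω₁ ++ ω₂) t =
      fcount cs ω₂ t + fcount cs ω₁ (cs.wordProd ω₂ * t * (cs.wordProd ω₂)⁻¹) := by
  have h := phi_wordProd cs hra (ω₁ ++ ω₂) t 0
  rw [cs.wordProd_append, map_mul, Equiv.Perm.mul_apply,
    phi_wordProd cs hra ω₂ t 0, phi_wordProd cs hra ω₁] at h
  have h3 := (Prod.ext_iff.mp h).2
  simpa using h3.symm

theorem fcount_reverse (cs : CoxeterSystem M W)
    (hra : ∀ i j : B, i ≠ j → M i j = 2 ∨ M i j = 0) :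
    ∀ (β : List B) (t : W),
      fcount cs β.reverse (cs.wordProd β * t * (cs.wordProd β)⁻¹) = fcount cs β t := by
  intro β
  induction β with
  | nil => intro t; simp [fcount]
  | cons j γ ih =>
      classical
      intro t
      rw [List.reverse_cons, fcount_append cs hra]
      have hsingle : cs.wordProd [j] = cs.simple j := by
        rw [show [j] = j :: ([] : List B) from rfl, cs.wordProd_cons, cs.wordProd_nil, mul_one]
      have hXval : cs.wordProd (j :: γ) * t * (cs.wordProd (j :: γ))⁻¹
          = (cs.simple j * cs.wordProd γ) * t * (cs.simple j * cs.wordProd γ)⁻¹ := by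
        rw [cs.wordProd_cons]
      have hconj : cs.wordProd [j] * (cs.wordProd (j :: γ) * t * (cs.wordProd (j :: γ))⁻¹)
          * (cs.wordProd [j])⁻¹ = cs.wordProd γ * t * (cs.wordProd γ)⁻¹ := by
        rw [hsingle, cs.inv_simple, hXval, mul_inv_rev, cs.inv_simple]
        calc cs.simple j * (cs.simple j * cs.wordProd γ * t
                * ((cs.wordProd γ)⁻¹ * cs.simple j)) * cs.simple j
            = (cs.simple j * cs.simple j) * (cs.wordProd γ * t * (cs.wordProd γ)⁻¹)
              * (cs.simple j * cs.simple j) := by group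
          _ = cs.wordProd γ * t * (cs.wordProd γ)⁻¹ := by
              rw [cs.simple_mul_simple_self, one_mul, mul_one]
      rw [hconj, ih]
      have hcc : (cs.simple j * cs.wordProd γ)⁻¹ * cs.simple j
          * ((cs.simple j * cs.wordProd γ)⁻¹)⁻¹
          = (cs.wordProd γ)⁻¹ * cs.simple j * cs.wordProd γ := by
        simp [mul_inv_rev, cs.inv_simple, mul_assoc, cs.simple_mul_simple_cancel_left]
      have hiff : (cs.wordProd (j :: γ) * t * (cs.wordProd (j :: γ))⁻¹ = cs.simple j)
          ↔ (t = (cs.wordProd γ)⁻¹ * cs.simple j * cs.wordProd γ) := by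
        rw [hXval, mul_eq_iff', hcc]
      have hfj : fcount cs [j] (cs.wordProd (j :: γ) * t * (cs.wordProd (j :: γ))⁻¹)
          = if t = (cs.wordProd γ)⁻¹ * cs.simple j * cs.wordProd γ then 1 else 0 := by
        simp only [fcount, cs.wordProd_nil, inv_one, one_mul, mul_one, zero_add]
        rw [if_congr hiff rfl rfl]
      rw [hfj]
      simp only [fcount]
      rw [add_comm]

theorem fcount_eq_zero_of_not_mem (cs : CoxeterSystem M W)
    {ω : List B} {t : W} (h : t ∉ cs.rightInvSeq ω) :
    fcount cs ω t = 0 := by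
  induction ω with
  | nil => simp [fcount]
  | cons i ω ih =>
      have hris : cs.rightInvSeq (i :: ω)
          = ((cs.wordProd ω)⁻¹ * cs.simple i * cs.wordProd ω) :: cs.rightInvSeq ω := rfl
      rw [hris, List.mem_cons] at h
      push_neg at h
      simp only [fcount]
      rw [ih h.2, if_neg h.1, add_zero]

/-- Strong exchange property. -/
theorem strong_exchange (cs : CoxeterSystem M W)
    (hra : ∀ i j : B, i ≠ j → M i j = 2 ∨ M i j = 0)
    {ω : List B} (hred : cs.IsReduced ω) {t : W} (htr : cs.IsReflection t)
    (hlt : cs.length (cs.wordProd ω * t) < cs.length (cs.wordProd ω)) :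
    t ∈ cs.rightInvSeq ω := by
  by_contra hmem
  have h0 : fcount cs ω t = 0 := fcount_eq_zero_of_not_mem cs hmem
  have htt : t * t = 1 := htr.mul_self
  obtain ⟨v, i, htv⟩ := htr
  obtain ⟨β, hβ⟩ := cs.wordProd_surjective v
  obtain ⟨α, hαred, hα⟩ := cs.exists_reduced_word' (cs.wordProd ω * t)
  set δ : List B := β ++ i :: β.reverse with hδ
  have hπδ : cs.wordProd δ = t := by
    rw [hδ, cs.wordProd_append, cs.wordProd_cons, cs.wordProd_reverse, hβ, htv, mul_assoc]
  have hπ : cs.wordProd (α ++ δ) = cs.wordProd ω := by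
    rw [cs.wordProd_append, hπδ, ← hα, mul_assoc, htt, mul_one]
  -- fcount α t = 0
  have hαzero : fcount cs α t = 0 := by
    apply fcount_eq_zero_of_not_mem
    intro hmem'
    have hInv := (cs.isRightInversion_of_mem_rightInvSeq hαred hmem').2
    rw [← hα, mul_assoc, htt, mul_one] at hInv
    omega
  -- fcount δ t = 1
  have hδone : fcount cs δ t = 1 := by
    rw [hδ, fcount_append cs hra]
    have hπtail : cs.wordProd (i :: β.reverse) = cs.simple i * v⁻¹ := by
      rw [cs.wordProd_cons, cs.wordProd_reverse, hβ]
    have hconj : cs.wordProd (i :: β.reverse) * t * (cs.wordProd (i :: β.reverse))⁻¹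
        = cs.simple i := by
      rw [hπtail, htv, mul_inv_rev, inv_inv, cs.inv_simple]
      calc cs.simple i * v⁻¹ * (v * cs.simple i * v⁻¹) * (v * cs.simple i)
          = cs.simple i * (v⁻¹ * v) * cs.simple i * (v⁻¹ * v) * cs.simple i := by group
        _ = cs.simple i * cs.simple i * cs.simple i := by
            rw [inv_mul_cancel, mul_one, mul_one]
        _ = cs.simple i := by rw [cs.simple_mul_simple_self, one_mul]
    rw [hconj]
    have hcondpos : t = (cs.wordProd β.reverse)⁻¹ * cs.simple i * cs.wordProd β.reverse := by
      rw [cs.wordProd_reverse, hβ, inv_inv, ← htv]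
    have hstep : fcount cs (i :: β.reverse) t = fcount cs β.reverse t + 1 := by
      simp only [fcount]
      rw [if_pos hcondpos]
    rw [hstep]
    have hrev : fcount cs β.reverse t = fcount cs β (cs.simple i) := by
      have h := fcount_reverse cs hra β (cs.simple i)
      rw [hβ, ← htv] at h
      exact h
    rw [hrev]
    have hz : ∀ x : ZMod 2, x + 1 + x = 1 := by decide
    exact hz _
  have hcomp : fcount cs (α ++ δ) t = 1 := by
    rw [fcount_append cs hra, hπδ,
      show t * t * t⁻¹ = t from by rw [mul_inv_cancel_right], hαzero, hδone, add_zero]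
  have hfin := fcount_eq_of_wordProd_eq cs hra hπ t
  rw [hcomp, h0] at hfin
  exact absurd hfin (by decide)

/-- Bruhat order increases length. -/
theorem bruhatLE_length_le (cs : CoxeterSystem M W) {a b : W} (h : bruhatLE cs a b) :
    cs.length a ≤ cs.length b := by
  induction h with
  | refl => exact le_rfl
  | tail _ hbc ih =>
      obtain ⟨t, _, _, hlen⟩ := hbc
      exact ih.trans hlen.le

theorem bruhatLE_eq_of_length_eq (cs : CoxeterSystem M W) {a b : W}
    (h : bruhatLE cs a b) (hl : cs.length a = cs.length b) : a = b := by
  rcases Relation.ReflTransGen.cases_head h with rfl | ⟨c, hac, hcb⟩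
  · rfl
  · obtain ⟨t, _, _, hlen⟩ := hac
    have := bruhatLE_length_le cs hcb
    omega

/-- A Bruhat cover is a single reflection step. -/
theorem cov_step (cs : CoxeterSystem M W) {x y : W} (h : bruhatCovBy cs x y) :
    ∃ t : W, cs.IsReflection t ∧ y = x * t ∧ cs.length y = cs.length x + 1 := by
  obtain ⟨hle, hlen⟩ := h
  rcases Relation.ReflTransGen.cases_head hle with rfl | ⟨z, hstep, hle'⟩
  · exact absurd hlen (by omega)
  · obtain ⟨t, htr, hz, hlt⟩ := hstep
    have hzy : cs.length z ≤ cs.length y := bruhatLE_length_le cs hle'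
    have heq : cs.length z = cs.length y := by omega
    have hzeq := bruhatLE_eq_of_length_eq cs hle' heq
    exact ⟨t, htr, by rw [← hzeq, hz], hlen⟩

/-- Key lemma: in a cover, a left descent of the top which is not a left descent of
the bottom realizes the cover. -/
theorem descent_down (cs : CoxeterSystem M W)
    (hra : ∀ i j : B, i ≠ j → M i j = 2 ∨ M i j = 0)
    {x y : W} {t : W} (htr : cs.IsReflection t) (hxy : y = x * t)
    (hlen : cs.length y = cs.length x + 1) (q : B)
    (hqy : cs.IsLeftDescent y q) (hqx : ¬ cs.IsLeftDescent x q) :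
    y = cs.simple q * x := by
  have hqx' : cs.length (cs.simple q * x) = cs.length x + 1 := cs.not_isLeftDescent_iff.mp hqx
  obtain ⟨ω, hred, hxw⟩ := cs.exists_reduced_word' x
  have hlenω : cs.length x = ω.length := by rw [hxw]; exact hred
  have hred' : cs.IsReduced (q :: ω) := by
    show cs.length (cs.wordProd (q :: ω)) = (q :: ω).length
    rw [cs.wordProd_cons, ← hxw, hqx', List.length_cons]
    omega
  have hinv : cs.length (cs.wordProd (q :: ω) * t) < cs.length (cs.wordProd (q :: ω)) := by
    rw [cs.wordProd_cons, ← hxw, mul_assoc, ← hxy, hqx', ← hlen]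
    exact hqy
  have hmem := strong_exchange cs hra hred' htr hinv
  have hris : cs.rightInvSeq (q :: ω)
      = ((cs.wordProd ω)⁻¹ * cs.simple q * cs.wordProd ω) :: cs.rightInvSeq ω := rfl
  rw [hris, List.mem_cons] at hmem
  rcases hmem with h | h
  · rw [hxy, h, ← hxw]
    group
  · have hInv := (cs.isRightInversion_of_mem_rightInvSeq hred h).2
    rw [← hxw, ← hxy] at hInv
    omega

end SEAux

/-- In a right-angled Coxeter group, if `x₁, x₂ ⋖ y₁, y₂` form a butterfly and `q` is a
common left descent of `y₁` and `y₂`, then `q` is a common left descent of `x₁` and `x₂`. -/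
theorem stmt11 (cs : CoxeterSystem M W)
    (hra : ∀ i j : B, i ≠ j → M i j = 2 ∨ M i j = 0)
    (x₁ x₂ y₁ y₂ : W) (hx : x₁ ≠ x₂) (hy : y₁ ≠ y₂)
    (h11 : bruhatCovBy cs x₁ y₁) (h12 : bruhatCovBy cs x₁ y₂)
    (h21 : bruhatCovBy cs x₂ y₁) (h22 : bruhatCovBy cs x₂ y₂)
    (q : B) (hq₁ : cs.IsLeftDescent y₁ q) (hq₂ : cs.IsLeftDescent y₂ q) :
    cs.IsLeftDescent x₁ q ∧ cs.IsLeftDescent x₂ q := by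
  have key : ∀ x : W, bruhatCovBy cs x y₁ → bruhatCovBy cs x y₂ → cs.IsLeftDescent x q := by
    intro x h1 h2
    by_contra hq
    obtain ⟨t₁, ht₁, he₁, hl₁⟩ := SEAux.cov_step cs h1
    obtain ⟨t₂, ht₂, he₂, hl₂⟩ := SEAux.cov_step cs h2
    have e1 : y₁ = cs.simple q * x := SEAux.descent_down cs hra ht₁ he₁ hl₁ q hq₁ hq
    have e2 : y₂ = cs.simple q * x := SEAux.descent_down cs hra ht₂ he₂ hl₂ q hq₂ hq
    exact hy (e1.trans e2.symm)
  exact ⟨key x₁ h11 h12, key x₂ h21 h22⟩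
end

section
/- Let w ∈ Sₙ be Bruhat irreducible. If w is right-almost-reducible at i and w is left-almost-reducible at j (equivalently, w⁻¹ is right-almost-reducible at j), then i ≠ j and the adjacent transpositions s_i and s_j commute, i.e., |i − j| ≥ 2. -/
/-- The number of inversions (Coxeter length) of a permutation of `Fin n`. -/
def invNum {n : ℕ} (w : Equiv.Perm (Fin n)) : ℕ :=
  (Finset.univ.filter (fun p : Fin n × Fin n => p.1 < p.2 ∧ w p.2 < w p.1)).card

/-- The simple transposition `s_i = (i, i+1)` in `S_{n+1}` (0-indexed). -/
def simpleS {n : ℕ} (i : Fin n) : Equiv.Perm (Fin (n + 1)) :=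
  Equiv.swap i.castSucc i.succ

/-- `i` is a left descent of `w`. -/
def isLeftDescentS {n : ℕ} (w : Equiv.Perm (Fin (n + 1))) (i : Fin n) : Prop :=
  invNum (simpleS i * w) < invNum w

/-- `i` is a right descent of `w`. -/
def isRightDescentS {n : ℕ} (w : Equiv.Perm (Fin (n + 1))) (i : Fin n) : Prop :=
  invNum (w * simpleS i) < invNum w

/-- The support of `w`: the simple transpositions appearing in some reduced word for `w`. -/
def suppS {n : ℕ} (w : Equiv.Perm (Fin (n + 1))) : Set (Fin n) :=
  {i | ∃ l : List (Fin n), w = (l.map simpleS).prod ∧ l.length = invNum w ∧ i ∈ l}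

/-- The parabolic subgroup of `S_{n+1}` generated by the simple transpositions in `J`. -/
def parabolicS {n : ℕ} (J : Set (Fin n)) : Subgroup (Equiv.Perm (Fin (n + 1))) :=
  Subgroup.closure (simpleS '' J)

/-- `w` is Bruhat irreducible: it has full support and admits no factorization into two
nontrivial factors with disjoint supports. -/
def bruhatIrreducibleS {n : ℕ} (w : Equiv.Perm (Fin (n + 1))) : Prop :=
  suppS w = Set.univ ∧
  ¬ ∃ w' w'' : Equiv.Perm (Fin (n + 1)),
      w = w' * w'' ∧ Disjoint (suppS w') (suppS w'') ∧ w' ≠ 1 ∧ w'' ≠ 1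

/-- `w` is right-almost-reducible at `i`: the parabolic decomposition `w = w^J · w_J` with
`J = {s_i, …, s_{n-1}}` is a BP-decomposition, `supp(w^J) ∩ J = {s_i}`, and `s_i` is
neither a left nor a right descent of `w`. -/
def rightAlmostReducibleS {n : ℕ} (w : Equiv.Perm (Fin (n + 1))) (i : Fin n) : Prop :=
  ∃ a b : Equiv.Perm (Fin (n + 1)),
    w = a * b ∧ b ∈ parabolicS {j | i ≤ j} ∧
    (∀ x ∈ parabolicS {j : Fin n | i ≤ j}, invNum a ≤ invNum (a * x)) ∧
    (suppS a ∩ {j | i ≤ j} ⊆ {j | isLeftDescentS b j}) ∧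
    suppS a ∩ {j | i ≤ j} = {i} ∧
    ¬ isLeftDescentS w i ∧ ¬ isRightDescentS w i

/-- `w` is left-almost-reducible at `j` iff `w⁻¹` is right-almost-reducible at `j`. -/
def leftAlmostReducibleS {n : ℕ} (w : Equiv.Perm (Fin (n + 1))) (j : Fin n) : Prop :=
  rightAlmostReducibleS w⁻¹ j

/-- `w` contains the pattern `p`. -/
def containsPattern {n k : ℕ} (w : Equiv.Perm (Fin n)) (p : Equiv.Perm (Fin k)) : Prop :=
  ∃ f : Fin k → Fin n, StrictMono f ∧ ∀ x y : Fin k, p x < p y ↔ w (f x) < w (f y)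

namespace Stmt18Aux

variable {n m : ℕ}

lemma val_ne_of_ne {a b : Fin m} (h : a ≠ b) : a.val ≠ b.val :=
  fun hv => h (Fin.ext hv)

lemma simpleS_apply_castSucc (k : Fin n) : simpleS k k.castSucc = k.succ :=
  Equiv.swap_apply_left _ _

lemma simpleS_apply_succ (k : Fin n) : simpleS k k.succ = k.castSucc :=
  Equiv.swap_apply_right _ _

lemma simpleS_apply_of_ne {k : Fin n} {p : Fin (n + 1)} (h1 : p.val ≠ k.val)
    (h2 : p.val ≠ k.val + 1) : simpleS k p = p :=
  Equiv.swap_apply_of_ne_of_ne (fun h => h1 (by rw [h]; rfl)) (fun h => h2 (by rw [h]; rfl))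

lemma simpleS_mul_self (k : Fin n) : simpleS k * simpleS k = 1 :=
  Equiv.swap_mul_self _ _

lemma simpleS_inv (k : Fin n) : (simpleS k)⁻¹ = simpleS k := by
  simp [simpleS]

lemma mul_simpleS_apply (u : Equiv.Perm (Fin (n + 1))) (k : Fin n) (x : Fin (n + 1)) :
    (u * simpleS k) x = u (Equiv.swap k.castSucc k.succ x) := rfl

def invSet (u : Equiv.Perm (Fin m)) : Finset (Fin m × Fin m) :=
  Finset.univ.filter (fun p => p.1 < p.2 ∧ u p.2 < u p.1)

lemma invNum_def (u : Equiv.Perm (Fin m)) : invNum u = (invSet u).card := rfl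

lemma mem_invSet {u : Equiv.Perm (Fin m)} {p : Fin m × Fin m} :
    p ∈ invSet u ↔ p.1 < p.2 ∧ u p.2 < u p.1 := by
  simp [invSet]

lemma invNum_inv (u : Equiv.Perm (Fin m)) : invNum u⁻¹ = invNum u := by
  rw [invNum_def, invNum_def]
  apply Finset.card_bij' (i := fun p _ => (u⁻¹ p.2, u⁻¹ p.1)) (j := fun p _ => (u p.2, u p.1))
  · intro p hp
    rw [mem_invSet] at hp ⊢
    refine ⟨hp.2, ?_⟩
    simpa using hp.1
  · intro p hp
    rw [mem_invSet] at hp ⊢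
    refine ⟨hp.2, ?_⟩
    simpa using hp.1
  · intro p hp; simp
  · intro p hp; simp

lemma swap_val (k : Fin n) (x : Fin (n + 1)) :
    (Equiv.swap k.castSucc k.succ x).val =
      if x.val = k.val then k.val + 1 else if x.val = k.val + 1 then k.val else x.val := by
  rcases eq_or_ne x k.castSucc with h | h
  · subst h
    rw [Equiv.swap_apply_left, if_pos (show (Fin.castSucc k).val = k.val from rfl)]
    rfl
  · rcases eq_or_ne x k.succ with h2 | h2
    · subst h2
      rw [Equiv.swap_apply_right, if_neg (by simp),
        if_pos (show (Fin.succ k : Fin (n + 1)).val = k.val + 1 from rfl)]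
      rfl
    · have e1 : x.val ≠ k.val := fun hh => h (Fin.ext hh)
      have e2 : x.val ≠ k.val + 1 := fun hh => h2 (Fin.ext hh)
      rw [Equiv.swap_apply_of_ne_of_ne h h2, if_neg e1, if_neg e2]

lemma swap_lt_swap {k : Fin n} {p q : Fin (n + 1)} (hpq : p < q)
    (hne : ¬(p = k.castSucc ∧ q = k.succ)) :
    Equiv.swap k.castSucc k.succ p < Equiv.swap k.castSucc k.succ q := by
  have hne' : ¬(p.val = k.val ∧ q.val = k.val + 1) := by
    intro hh
    exact hne ⟨Fin.ext hh.1, Fin.ext hh.2⟩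
  rw [Fin.lt_def] at hpq ⊢
  rw [swap_val, swap_val]
  have hq := q.isLt
  split_ifs <;> omega

lemma invNum_mul_simpleS_of_lt {u : Equiv.Perm (Fin (n + 1))} {k : Fin n}
    (h : u k.castSucc < u k.succ) :
    invNum (u * simpleS k) = invNum u + 1 := by
  have hx : ((k.castSucc : Fin (n + 1)), (k.succ : Fin (n + 1))) ∈ invSet (u * simpleS k) := by
    rw [mem_invSet]
    refine ⟨Fin.castSucc_lt_succ (i := k), ?_⟩
    show (u * simpleS k) k.succ < (u * simpleS k) k.castSucc
    rw [mul_simpleS_apply, mul_simpleS_apply, Equiv.swap_apply_left, Equiv.swap_apply_right]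
    exact h
  have hxu : ((k.castSucc : Fin (n + 1)), (k.succ : Fin (n + 1))) ∉ invSet u := by
    rw [mem_invSet]
    intro hh
    exact absurd h (not_lt.mpr (le_of_lt hh.2))
  rw [invNum_def, invNum_def, ← Finset.card_erase_add_one hx]
  congr 1
  apply Finset.card_bij'
    (i := fun p (_ : p ∈ (invSet (u * simpleS k)).erase (k.castSucc, k.succ)) =>
      (Equiv.swap k.castSucc k.succ p.1, Equiv.swap k.castSucc k.succ p.2))
    (j := fun p (_ : p ∈ invSet u) =>
      (Equiv.swap k.castSucc k.succ p.1, Equiv.swap k.castSucc k.succ p.2))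
  · intro p hp
    rw [Finset.mem_erase] at hp
    obtain ⟨hne, hp⟩ := hp
    rw [mem_invSet] at hp ⊢
    refine ⟨swap_lt_swap hp.1 (fun hh => hne (Prod.ext hh.1 hh.2)), ?_⟩
    exact hp.2
  · intro p hp
    rw [mem_invSet] at hp
    rw [Finset.mem_erase]
    constructor
    · intro heq
      have e1 : p.1 = k.succ := by
        have := congrArg Prod.fst heq
        simp only at this
        have : Equiv.swap k.castSucc k.succ p.1 = Equiv.swap k.castSucc k.succ k.succ := by
          rw [this, Equiv.swap_apply_right]
        exact (Equiv.swap k.castSucc k.succ).injective this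
      have e2 : p.2 = k.castSucc := by
        have := congrArg Prod.snd heq
        simp only at this
        have : Equiv.swap k.castSucc k.succ p.2 = Equiv.swap k.castSucc k.succ k.castSucc := by
          rw [this, Equiv.swap_apply_left]
        exact (Equiv.swap k.castSucc k.succ).injective this
      have := hp.1
      rw [e1, e2] at this
      exact absurd this (not_lt.mpr (le_of_lt (Fin.castSucc_lt_succ (i := k))))
    · rw [mem_invSet]
      constructor
      · apply swap_lt_swap hp.1
        intro hh
        apply hxu
        have hpe : p = (k.castSucc, k.succ) := Prod.ext hh.1 hh.2
        rw [← hpe, mem_invSet]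
        exact hp
      · show (u * simpleS k) _ < (u * simpleS k) _
        rw [mul_simpleS_apply, mul_simpleS_apply, Equiv.swap_apply_self, Equiv.swap_apply_self]
        exact hp.2
  · intro p hp; simp [Equiv.swap_apply_self]
  · intro p hp; simp [Equiv.swap_apply_self]

lemma invNum_mul_simpleS_of_gt {u : Equiv.Perm (Fin (n + 1))} {k : Fin n}
    (h : u k.succ < u k.castSucc) :
    invNum u = invNum (u * simpleS k) + 1 := by
  have h2 : (u * simpleS k) k.castSucc < (u * simpleS k) k.succ := by
    rw [mul_simpleS_apply, mul_simpleS_apply, Equiv.swap_apply_left, Equiv.swap_apply_right]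
    exact h
  have h3 := invNum_mul_simpleS_of_lt h2
  rw [mul_assoc, simpleS_mul_self, mul_one] at h3
  exact h3



lemma invNum_one : invNum (1 : Equiv.Perm (Fin m)) = 0 := by
  rw [invNum_def, Finset.card_eq_zero]
  unfold invSet
  rw [Finset.filter_eq_empty_iff]
  rintro ⟨p, q⟩ -
  simp only [Equiv.Perm.one_apply, not_and]
  intro h1
  exact not_lt.mpr (le_of_lt h1)

lemma invNum_mul_simpleS_le (u : Equiv.Perm (Fin (n + 1))) (k : Fin n) :
    invNum (u * simpleS k) ≤ invNum u + 1 := by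
  rcases lt_trichotomy (u k.castSucc) (u k.succ) with h | h | h
  · exact le_of_eq (invNum_mul_simpleS_of_lt h)
  · exact absurd (u.injective h) (Fin.castSucc_lt_succ (i := k)).ne
  · have := invNum_mul_simpleS_of_gt h; omega

lemma prod_append_singleton (l : List (Fin n)) (x : Fin n) :
    (((l ++ [x]).map simpleS).prod : Equiv.Perm (Fin (n + 1)))
      = (l.map simpleS).prod * simpleS x := by
  simp

lemma invNum_prod_le (l : List (Fin n)) :
    invNum (((l.map simpleS).prod : Equiv.Perm (Fin (n + 1)))) ≤ l.length := by
  induction l using List.reverseRecOn with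
  | nil => simp [invNum_one]
  | append_singleton l x ih =>
    rw [prod_append_singleton]
    have := invNum_mul_simpleS_le ((l.map simpleS).prod) x
    simp only [List.length_append, List.length_singleton]
    omega

def crossSet (k : Fin n) (u : Equiv.Perm (Fin (n + 1))) : Finset (Fin (n + 1) × Fin (n + 1)) :=
  Finset.univ.filter (fun p => p.1.val ≤ k.val ∧ k.val < p.2.val ∧ (u p.2).val < (u p.1).val)

def crossNum (k : Fin n) (u : Equiv.Perm (Fin (n + 1))) : ℕ := (crossSet k u).card

lemma mem_crossSet {k : Fin n} {u : Equiv.Perm (Fin (n + 1))} {p : Fin (n + 1) × Fin (n + 1)} :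
    p ∈ crossSet k u ↔ p.1.val ≤ k.val ∧ k.val < p.2.val ∧ (u p.2).val < (u p.1).val := by
  simp [crossSet]

lemma swap_val_le_iff {k x0 : Fin n} (h : x0 ≠ k) (x : Fin (n + 1)) :
    (Equiv.swap x0.castSucc x0.succ x).val ≤ k.val ↔ x.val ≤ k.val := by
  have hx0 := val_ne_of_ne h
  rw [swap_val]
  split_ifs <;> omega

lemma swap_val_lt_iff {k x0 : Fin n} (h : x0 ≠ k) (x : Fin (n + 1)) :
    k.val < (Equiv.swap x0.castSucc x0.succ x).val ↔ k.val < x.val := by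
  rw [← not_le, ← not_le, swap_val_le_iff h]

lemma crossNum_mul_simpleS_ne {u : Equiv.Perm (Fin (n + 1))} {k x0 : Fin n} (h : x0 ≠ k) :
    crossNum k (u * simpleS x0) = crossNum k u := by
  unfold crossNum
  apply Finset.card_bij'
    (i := fun p (_ : p ∈ crossSet k (u * simpleS x0)) =>
      (Equiv.swap x0.castSucc x0.succ p.1, Equiv.swap x0.castSucc x0.succ p.2))
    (j := fun p (_ : p ∈ crossSet k u) =>
      (Equiv.swap x0.castSucc x0.succ p.1, Equiv.swap x0.castSucc x0.succ p.2))
  · intro p hp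
    rw [mem_crossSet] at hp ⊢
    exact ⟨(swap_val_le_iff h _).mpr hp.1, (swap_val_lt_iff h _).mpr hp.2.1, hp.2.2⟩
  · intro p hp
    rw [mem_crossSet] at hp ⊢
    refine ⟨(swap_val_le_iff h _).mpr hp.1, (swap_val_lt_iff h _).mpr hp.2.1, ?_⟩
    show ((u * simpleS x0) _).val < ((u * simpleS x0) _).val
    rw [mul_simpleS_apply, mul_simpleS_apply, Equiv.swap_apply_self, Equiv.swap_apply_self]
    exact hp.2.2
  · intro p hp; simp [Equiv.swap_apply_self]
  · intro p hp; simp [Equiv.swap_apply_self]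

lemma crossNum_mul_simpleS_self {u : Equiv.Perm (Fin (n + 1))} {k : Fin n}
    (h : u k.castSucc < u k.succ) :
    crossNum k u + 1 ≤ crossNum k (u * simpleS k) := by
  have hF := Fin.lt_def.mp h
  have hnotmem : ((k.castSucc : Fin (n + 1)), (k.succ : Fin (n + 1))) ∉ crossSet k u := by
    rw [mem_crossSet]
    intro hh
    obtain ⟨-, -, h3⟩ := hh
    change (u k.succ).val < (u k.castSucc).val at h3
    omega
  have hsub : insert ((k.castSucc : Fin (n + 1)), (k.succ : Fin (n + 1))) (crossSet k u)
      ⊆ crossSet k (u * simpleS k) := by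
    intro p hp
    rcases Finset.mem_insert.mp hp with hp | hp
    · subst hp
      rw [mem_crossSet]
      refine ⟨le_of_eq rfl, by simp, ?_⟩
      show ((u * simpleS k) k.succ).val < ((u * simpleS k) k.castSucc).val
      rw [mul_simpleS_apply, mul_simpleS_apply, Equiv.swap_apply_left, Equiv.swap_apply_right]
      exact hF
    · rw [mem_crossSet] at hp ⊢
      obtain ⟨h1, h2, h3⟩ := hp
      refine ⟨h1, h2, ?_⟩
      show (u (Equiv.swap k.castSucc k.succ p.2)).val < (u (Equiv.swap k.castSucc k.succ p.1)).val
      rcases eq_or_ne p.1 k.castSucc with e1 | e1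
      · rcases eq_or_ne p.2 k.succ with e2 | e2
        · rw [e1, e2] at h3; omega
        · have e2' : p.2 ≠ k.castSucc := by
            intro hh; rw [hh] at h2; simp at h2
          rw [e1, Equiv.swap_apply_left, Equiv.swap_apply_of_ne_of_ne e2' e2]
          rw [e1] at h3
          omega
      · have e1' : p.1 ≠ k.succ := by
          intro hh
          have : p.1.val = k.val + 1 := by rw [hh]; rfl
          omega
        rw [Equiv.swap_apply_of_ne_of_ne e1 e1']
        rcases eq_or_ne p.2 k.succ with e2 | e2
        · rw [e2, Equiv.swap_apply_right]
          rw [e2] at h3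
          omega
        · have e2' : p.2 ≠ k.castSucc := by
            intro hh; rw [hh] at h2; simp at h2
          rw [Equiv.swap_apply_of_ne_of_ne e2' e2]
          exact h3
  have hle := Finset.card_le_card hsub
  rw [Finset.card_insert_of_notMem hnotmem] at hle
  exact hle

lemma reduced_word_cross : ∀ l : List (Fin n),
    invNum (((l.map simpleS).prod : Equiv.Perm (Fin (n + 1)))) = l.length →
    ∀ k ∈ l, 0 < crossNum k ((l.map simpleS).prod) := by
  intro l
  induction l using List.reverseRecOn with
  | nil => intro _ k hk; simp at hk
  | append_singleton l x ih =>
    intro hlen k hk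
    rw [prod_append_singleton] at hlen ⊢
    rw [List.length_append, List.length_singleton] at hlen
    set u : Equiv.Perm (Fin (n + 1)) := (l.map simpleS).prod with hu
    rcases lt_trichotomy (u x.castSucc) (u x.succ) with hc | hc | hc
    · have h1 := invNum_mul_simpleS_of_lt hc
      have h2 : invNum u = l.length := by omega
      rcases List.mem_append.mp hk with hk' | hk'
      · have hpos := ih h2 k hk'
        rcases eq_or_ne x k with hxk | hxk
        · subst hxk
          have := crossNum_mul_simpleS_self hc
          omega
        · rw [crossNum_mul_simpleS_ne hxk]
          exact hpos
      · have hkx : k = x := by simpa using hk'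
        subst hkx
        have := crossNum_mul_simpleS_self hc
        omega
    · exact absurd (u.injective hc) (Fin.castSucc_lt_succ (i := x)).ne
    · have h1 := invNum_mul_simpleS_of_gt hc
      have h2 := invNum_prod_le (n := n) l
      rw [← hu] at h2
      omega

lemma exists_cross_of_mem_supp {u : Equiv.Perm (Fin (n + 1))} {k : Fin n} (hk : k ∈ suppS u) :
    ∃ p q : Fin (n + 1), p.val ≤ k.val ∧ k.val < q.val ∧ (u q).val < (u p).val := by
  obtain ⟨l, hl, hlen, hm⟩ := hk
  have h0 : 0 < crossNum k u := by
    have := reduced_word_cross l (by rw [← hl, hlen]) k hm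
    rwa [← hl] at this
  obtain ⟨⟨p, q⟩, hmem⟩ := Finset.card_pos.mp h0
  rw [mem_crossSet] at hmem
  exact ⟨p, q, hmem.1, hmem.2.1, hmem.2.2⟩



lemma parabolic_fix {i : Fin n} {b : Equiv.Perm (Fin (n + 1))}
    (hb : b ∈ parabolicS {j : Fin n | i ≤ j}) :
    ∀ p : Fin (n + 1), p.val < i.val → b p = p := by
  unfold parabolicS at hb
  induction hb using Subgroup.closure_induction with
  | mem x hx =>
    obtain ⟨k, hk, rfl⟩ := hx
    intro p hp
    rw [Set.mem_setOf_eq, Fin.le_def] at hk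
    exact simpleS_apply_of_ne (by omega) (by omega)
  | one => intro p _; rfl
  | mul x y hx hy ihx ihy =>
    intro p hp
    rw [Equiv.Perm.mul_apply, ihy p hp, ihx p hp]
  | inv x hx ihx =>
    intro p hp
    exact x.injective (by rw [← Equiv.Perm.mul_apply, mul_inv_cancel, Equiv.Perm.one_apply, ihx p hp])

lemma parabolic_val_ge {i : Fin n} {b : Equiv.Perm (Fin (n + 1))}
    (hb : b ∈ parabolicS {j : Fin n | i ≤ j})
    {q : Fin (n + 1)} (hq : i.val ≤ q.val) : i.val ≤ (b q).val := by
  by_contra hcon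
  push_neg at hcon
  have h2 := parabolic_fix hb (b q) hcon
  have h3 : b q = q := b.injective h2
  rw [h3] at hcon
  omega

lemma rightDescent_of_gt {u : Equiv.Perm (Fin (n + 1))} {k : Fin n}
    (h : u k.succ < u k.castSucc) : isRightDescentS u k := by
  unfold isRightDescentS
  have := invNum_mul_simpleS_of_gt h
  omega

lemma ascent_of_not_rightDescent {u : Equiv.Perm (Fin (n + 1))} {k : Fin n}
    (h : ¬ isRightDescentS u k) : u k.castSucc < u k.succ := by
  rcases lt_trichotomy (u k.castSucc) (u k.succ) with h1 | h1 | h1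
  · exact h1
  · exact absurd (u.injective h1) (Fin.castSucc_lt_succ (i := k)).ne
  · exact absurd (rightDescent_of_gt h1) h

lemma simpleS_mul_eq (u : Equiv.Perm (Fin (n + 1))) (k : Fin n) :
    simpleS k * u = (u⁻¹ * simpleS k)⁻¹ := by
  rw [mul_inv_rev, inv_inv, simpleS_inv]

lemma lt_of_not_leftDescent {u : Equiv.Perm (Fin (n + 1))} {k : Fin n}
    (h : ¬ isLeftDescentS u k) : u⁻¹ k.castSucc < u⁻¹ k.succ := by
  rcases lt_trichotomy (u⁻¹ k.castSucc) (u⁻¹ k.succ) with h1 | h1 | h1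
  · exact h1
  · exact absurd (u⁻¹.injective h1) (Fin.castSucc_lt_succ (i := k)).ne
  · exfalso
    apply h
    unfold isLeftDescentS
    have h2 := invNum_mul_simpleS_of_gt h1
    rw [simpleS_mul_eq, invNum_inv, ← invNum_inv u]
    omega

lemma gt_of_leftDescent {u : Equiv.Perm (Fin (n + 1))} {k : Fin n}
    (h : isLeftDescentS u k) : u⁻¹ k.succ < u⁻¹ k.castSucc := by
  rcases lt_trichotomy (u⁻¹ k.succ) (u⁻¹ k.castSucc) with h1 | h1 | h1
  · exact h1
  · exact absurd (u⁻¹.injective h1) (Fin.castSucc_lt_succ (i := k)).ne.symm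
  · exfalso
    unfold isLeftDescentS at h
    rw [simpleS_mul_eq, invNum_inv, ← invNum_inv u] at h
    have h2 := invNum_mul_simpleS_of_lt h1
    omega

lemma prod_map_reverse (l : List (Fin n)) :
    ((l.reverse.map simpleS).prod : Equiv.Perm (Fin (n + 1))) = ((l.map simpleS).prod)⁻¹ := by
  induction l with
  | nil => simp
  | cons x t ih =>
    rw [List.reverse_cons, List.map_append, List.prod_append, ih]
    simp [simpleS_inv, mul_inv_rev]

lemma mem_suppS_inv {u : Equiv.Perm (Fin (n + 1))} {k : Fin n} (hk : k ∈ suppS u) :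
    k ∈ suppS u⁻¹ := by
  obtain ⟨l, hl, hlen, hm⟩ := hk
  refine ⟨l.reverse, ?_, ?_, List.mem_reverse.mpr hm⟩
  · rw [prod_map_reverse, ← hl]
  · rw [List.length_reverse, invNum_inv, hlen]

lemma irr_inv {w : Equiv.Perm (Fin (n + 1))} (h : bruhatIrreducibleS w) :
    bruhatIrreducibleS w⁻¹ := by
  obtain ⟨h1, h2⟩ := h
  constructor
  · apply Set.eq_univ_of_forall
    intro k
    exact mem_suppS_inv (by rw [h1]; trivial)
  · rintro ⟨u, v, hw, hd, hu, hv⟩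
    apply h2
    refine ⟨v⁻¹, u⁻¹, ?_, ?_, inv_ne_one.mpr hv, inv_ne_one.mpr hu⟩
    · rw [← inv_inv w, hw, mul_inv_rev]
    · rw [Set.disjoint_left]
      intro k hk1 hk2
      have hv' : k ∈ suppS v := by
        have := mem_suppS_inv hk1; rwa [inv_inv] at this
      have hu' : k ∈ suppS u := by
        have := mem_suppS_inv hk2; rwa [inv_inv] at this
      exact Set.disjoint_left.mp hd hu' hv'

lemma prod_fix {i : Fin n} : ∀ l : List (Fin n), (∀ k ∈ l, k.val ≤ i.val) →
    ∀ p : Fin (n + 1), i.val + 2 ≤ p.val → ((l.map simpleS).prod : Equiv.Perm (Fin (n + 1))) p = p := by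
  intro l
  induction l with
  | nil => intro _ p _; rfl
  | cons x t ih =>
    intro hlet p hp
    rw [List.map_cons, List.prod_cons, Equiv.Perm.mul_apply,
      ih (fun k hk => hlet k (List.mem_cons_of_mem x hk)) p hp]
    have hx := hlet x (List.mem_cons_self (a := x) (l := t))
    exact simpleS_apply_of_ne (by omega) (by omega)



lemma keyAB {w : Equiv.Perm (Fin (n + 1))} {i : Fin n}
    (hirr : bruhatIrreducibleS w) (hR : rightAlmostReducibleS w i) :
    (∃ p : Fin (n + 1), p.val < i.val ∧ w p = i.succ) ∧ i.val + 2 ≤ (w i.castSucc).val := by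
  obtain ⟨a, b, hw, hbP, hmin, hDL, hsupp, hnl, hnr⟩ := hR
  have hi : i ∈ suppS a ∩ {j : Fin n | i ≤ j} := by rw [hsupp]; exact rfl
  -- the reduced word for a has all letters ≤ i
  obtain ⟨l, hal, hlen, hml⟩ := hi.1
  have hlet : ∀ k ∈ l, k.val ≤ i.val := by
    intro k hk
    by_contra hcon
    push_neg at hcon
    have hkmem : k ∈ suppS a ∩ {j : Fin n | i ≤ j} :=
      ⟨⟨l, hal, hlen, hk⟩, Fin.le_def.mpr (le_of_lt hcon)⟩
    rw [hsupp] at hkmem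
    have : k = i := hkmem
    omega
  have hafix : ∀ p : Fin (n + 1), i.val + 2 ≤ p.val → a p = p := by
    intro p hp
    rw [hal]
    exact prod_fix l hlet p hp
  have hasmall : ∀ p : Fin (n + 1), p.val ≤ i.val + 1 → (a p).val ≤ i.val + 1 := by
    intro p hp
    by_contra hcon
    push_neg at hcon
    have h1 := hafix (a p) (by omega)
    have h2 : a p = p := a.injective h1
    rw [h2] at hcon
    omega
  have hbfix : ∀ p : Fin (n + 1), p.val < i.val → b p = p := parabolic_fix hbP
  -- ascent of a at i
  have hsi : simpleS i ∈ parabolicS {j : Fin n | i ≤ j} :=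
    Subgroup.subset_closure ⟨i, le_refl i, rfl⟩
  have hA : a i.castSucc < a i.succ := by
    rcases lt_trichotomy (a i.castSucc) (a i.succ) with h | h | h
    · exact h
    · exact absurd (a.injective h) (Fin.castSucc_lt_succ (i := i)).ne
    · have h1 := invNum_mul_simpleS_of_gt h
      have h2 := hmin (simpleS i) hsi
      omega
  have hAv : (a i.castSucc).val < (a i.succ).val := Fin.lt_def.mp hA
  -- crossing of a at the cut i
  obtain ⟨p0, q0, hp0, hq0, hpq0⟩ := exists_cross_of_mem_supp hi.1
  have hq1 : q0.val = i.val + 1 := by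
    by_contra hq1
    have hq2 : i.val + 2 ≤ q0.val := by omega
    have h1 := hafix q0 hq2
    have h2 := hasmall p0 (by omega)
    rw [h1] at hpq0
    omega
  have hq0' : q0 = i.succ := Fin.ext hq1
  rw [hq0'] at hpq0
  have hpi : p0.val < i.val := by
    rcases Nat.lt_or_ge p0.val i.val with h | h
    · exact h
    · exfalso
      have : p0.val = i.val := by omega
      have hp0' : p0 = i.castSucc := Fin.ext this
      rw [hp0'] at hpq0
      omega
  -- position of the value i.succ in a
  set r : Fin (n + 1) := a⁻¹ i.succ with hrdef
  have har : a r = i.succ := a.apply_symm_apply i.succ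
  have hr2 : r.val ≤ i.val + 1 := by
    by_contra hcon
    push_neg at hcon
    have h1 := hafix r (by omega)
    rw [h1] at har
    have := congrArg Fin.val har
    rw [Fin.val_succ] at this
    omega
  have hrne1 : r.val ≠ i.val + 1 := by
    intro hh
    have : r = i.succ := Fin.ext hh
    rw [this] at har
    have h2 := hasmall p0 (by omega)
    have := congrArg Fin.val har
    rw [Fin.val_succ] at this
    omega
  have hrne2 : r.val ≠ i.val := by
    intro hh
    have hcast : r = i.castSucc := Fin.ext hh
    rw [hcast] at har
    have h2 := hasmall p0 (by omega)
    have h4 := congrArg Fin.val har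
    rw [Fin.val_succ] at h4
    omega
  have hrlt : r.val < i.val := by omega
  have hwr : w r = i.succ := by
    rw [hw, Equiv.Perm.mul_apply, hbfix r hrlt]
    exact har
  refine ⟨⟨r, hrlt, hwr⟩, ?_⟩
  -- part B
  have hld : isLeftDescentS b i := hDL hi
  have hbinv_gt : b⁻¹ i.succ < b⁻¹ i.castSucc := gt_of_leftDescent hld
  have hbP' : b⁻¹ ∈ parabolicS {j : Fin n | i ≤ j} := (parabolicS _).inv_mem hbP
  have hbi_ne : (b i.castSucc).val ≠ i.val := by
    intro hh
    have h1 : b i.castSucc = i.castSucc := Fin.ext hh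
    have h2 : b⁻¹ i.castSucc = i.castSucc := by
      rw [← h1, ← Equiv.Perm.mul_apply, inv_mul_cancel, Equiv.Perm.one_apply]
      exact h1.symm
    have h3 : i.val ≤ (b⁻¹ i.succ).val :=
      parabolic_val_ge hbP' (by rw [Fin.val_succ]; omega)
    rw [h2] at hbinv_gt
    have := Fin.lt_def.mp hbinv_gt
    omega
  have hbcv : i.val ≤ (b i.castSucc).val := parabolic_val_ge hbP (le_of_eq rfl)
  by_cases hbc : b i.castSucc = i.succ
  · by_cases hbt : b i.succ = i.castSucc
    · -- right descent: contradiction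
      exfalso
      apply hnr
      apply rightDescent_of_gt
      rw [hw, Equiv.Perm.mul_apply, Equiv.Perm.mul_apply, hbt, hbc]
      exact hA
    · -- irreducibility contradiction
      exfalso
      have hbig1 : i.val ≤ (b i.succ).val := parabolic_val_ge hbP (by rw [Fin.val_succ]; omega)
      have hbig2 : (b i.succ).val ≠ i.val := fun hh => hbt (Fin.ext hh)
      have hbig3 : (b i.succ).val ≠ i.val + 1 := by
        intro hh
        have h1 : b i.succ = i.succ := Fin.ext hh
        have h2 : i.succ = i.castSucc := b.injective (h1.trans hbc.symm)
        exact (Fin.castSucc_lt_succ (i := i)).ne h2.symm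
      have htv : i.val + 2 ≤ (b i.succ).val := by omega
      set w1 : Equiv.Perm (Fin (n + 1)) := a * simpleS i with hw1def
      set w2 : Equiv.Perm (Fin (n + 1)) := simpleS i * b with hw2def
      have hfac : w = w1 * w2 := by
        rw [hw1def, hw2def, mul_assoc, ← mul_assoc (simpleS i), simpleS_mul_self, one_mul, hw]
      have hw1small : ∀ p : Fin (n + 1), p.val ≤ i.val + 1 → (w1 p).val ≤ i.val + 1 := by
        intro p hp
        have he : w1 p = a (Equiv.swap i.castSucc i.succ p) := rfl
        rw [he]
        apply hasmall
        rw [swap_val]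
        split_ifs <;> omega
      have hw1fix : ∀ p : Fin (n + 1), i.val + 2 ≤ p.val → w1 p = p := by
        intro p hp
        have he : w1 p = a (simpleS i p) := rfl
        rw [he, simpleS_apply_of_ne (by omega) (by omega)]
        exact hafix p hp
      have hw2fix : ∀ p : Fin (n + 1), p.val ≤ i.val → w2 p = p := by
        intro p hp
        have he : w2 p = simpleS i (b p) := rfl
        rcases Nat.lt_or_ge p.val i.val with h | h
        · rw [he, hbfix p h, simpleS_apply_of_ne (by omega) (by omega)]
        · have hpv : p.val = i.val := by omega
          have hp' : p = i.castSucc := Fin.ext hpv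
          rw [he, hp', hbc]
          exact simpleS_apply_succ i
      have hw2big : ∀ q : Fin (n + 1), i.val < q.val → i.val < (w2 q).val := by
        intro q hq
        by_contra hcon
        push_neg at hcon
        have h2 := hw2fix (w2 q) hcon
        have h3 : w2 q = q := w2.injective h2
        rw [h3] at hcon
        omega
      have hsupp1 : ∀ k : Fin n, k ∈ suppS w1 → k.val ≤ i.val := by
        intro k hk
        by_contra hcon
        push_neg at hcon
        obtain ⟨p, q, hp, hq, hval⟩ := exists_cross_of_mem_supp hk
        have hq2 : i.val + 2 ≤ q.val := by omega
        have hfq := hw1fix q hq2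
        rw [hfq] at hval
        rcases Nat.lt_or_ge (i.val + 1) p.val with hp2 | hp2
        · have := hw1fix p (by omega)
          rw [this] at hval
          omega
        · have := hw1small p (by omega)
          omega
      have hsupp2 : ∀ k : Fin n, k ∈ suppS w2 → i.val < k.val := by
        intro k hk
        by_contra hcon
        push_neg at hcon
        obtain ⟨p, q, hp, hq, hval⟩ := exists_cross_of_mem_supp hk
        have hpfix := hw2fix p (by omega)
        rw [hpfix] at hval
        rcases Nat.lt_or_ge i.val q.val with h | h
        · have := hw2big q h
          omega
        · have := hw2fix q (by omega)
          rw [this] at hval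
          omega
      have hdisj : Disjoint (suppS w1) (suppS w2) := by
        rw [Set.disjoint_left]
        intro k h1 h2
        have := hsupp1 k h1
        have := hsupp2 k h2
        omega
      have hne1 : w1 ≠ 1 := by
        intro h
        have h2 : w1 r = r := by rw [h]; rfl
        have h3 : w1 r = i.succ := by
          have he : w1 r = a (simpleS i r) := rfl
          rw [he, simpleS_apply_of_ne (by omega) (by omega)]
          exact har
        rw [h2] at h3
        have := congrArg Fin.val h3
        rw [Fin.val_succ] at this
        omega
      have hne2 : w2 ≠ 1 := by
        intro h
        have h2 : w2 i.succ = i.succ := by rw [h]; rfl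
        have h3 : w2 i.succ = b i.succ := by
          have he : w2 i.succ = simpleS i (b i.succ) := rfl
          rw [he, simpleS_apply_of_ne (by omega) (by omega)]
        rw [h3] at h2
        have := congrArg Fin.val h2
        rw [Fin.val_succ] at this
        omega
      exact hirr.2 ⟨w1, w2, hfac, hdisj, hne1, hne2⟩
  · -- b i.castSucc has value ≥ i + 2
    have h2 : (b i.castSucc).val ≠ i.val + 1 := fun hh => hbc (Fin.ext hh)
    have h3 : i.val + 2 ≤ (b i.castSucc).val := by omega
    rw [hw, Equiv.Perm.mul_apply, hafix _ h3]
    exact h3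

end Stmt18Aux

/-- If a Bruhat irreducible `w ∈ S_{n+1}` is right-almost-reducible at `i` and
left-almost-reducible at `j`, then `i ≠ j` and `s_i`, `s_j` commute, i.e. `|i - j| ≥ 2`. -/
theorem stmt18 {n : ℕ} (w : Equiv.Perm (Fin (n + 1))) (i j : Fin n)
    (hirr : bruhatIrreducibleS w)
    (hR : rightAlmostReducibleS w i)
    (hL : leftAlmostReducibleS w j) :
    i ≠ j ∧ (i.val + 2 ≤ j.val ∨ j.val + 2 ≤ i.val) := by
  classical
  open Stmt18Aux in
  have hL' : rightAlmostReducibleS w⁻¹ j := hL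
  obtain ⟨hA, hB⟩ := Stmt18Aux.keyAB hirr hR
  obtain ⟨hA', hB'⟩ := Stmt18Aux.keyAB (Stmt18Aux.irr_inv hirr) hL'
  obtain ⟨_, _, _, _, _, _, _, hnl, _⟩ := hR
  obtain ⟨p, hp, hwp⟩ := hA
  obtain ⟨v, hv, hwv⟩ := hA'
  have hip : w⁻¹ i.succ = p := by rw [← hwp]; exact w.symm_apply_apply p
  have hld := Stmt18Aux.lt_of_not_leftDescent hnl
  have hmain : i.val + 2 ≤ j.val ∨ j.val + 2 ≤ i.val := by
    by_contra hcon
    push_neg at hcon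
    obtain ⟨hc1, hc2⟩ := hcon
    have hcase : j.val = i.val ∨ j.val = i.val + 1 ∨ i.val = j.val + 1 := by omega
    rcases hcase with hc | hc | hc
    · have hj : j = i := Fin.ext hc
      subst hj
      rw [hip] at hld
      rw [Fin.lt_def] at hld
      omega
    · have hj : (j.castSucc : Fin (n + 1)) = i.succ := Fin.ext (by rw [Fin.val_succ, Fin.coe_castSucc, hc])
      rw [hj, hip] at hB'
      omega
    · have hj : (j.succ : Fin (n + 1)) = i.castSucc := Fin.ext (by rw [Fin.val_succ, Fin.coe_castSucc, hc])
      have hwi : w i.castSucc = v := by rw [← hj, ← hwv]; exact w.apply_symm_apply v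
      rw [hwi] at hB
      omega
  refine ⟨?_, hmain⟩
  intro h
  subst h
  rcases hmain with h1 | h1 <;> omega
end
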